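/- arXiv:2401.15373 — 5 statements merged into one kernel-verified Lean document; each statement's English description precedes it below -/
import Mathlib

section
/- Let (X,d,μ) be a Borel metric measure space in which every closed ball has positive finite measure, fix r > 0, and suppose that X is s-doubling for every s ≥ r, has the Vitali covering property, and satisfies μ(B(x,r) △ B(y,r)) → 0 as y → x for each point x ∈ X. Let p ∈ (1,∞) and q ∈ [1,∞]. Then the averaging operator A_r : L^{p,q}(X) → L^{p,q}(X) is compact (i.e., maps ‖·‖_{p,q}-bounded sets to totally bounded sets) if and only if X is bounded. -/
open MeasureTheory Metric Filter Set

/-- The averaging operator `A_r f(x) = (1/μ(B(x,r))) ∫_{B(x,r)} f dμ`. -/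
noncomputable def avgOp {X : Type*} [MeasurableSpace X] [PseudoMetricSpace X]
    (μ : Measure X) (r : ℝ) (f : X → ℝ) (x : X) : ℝ :=
  (μ (closedBall x r)).toReal⁻¹ * ∫ y in closedBall x r, f y ∂μ

/-- `X` is `s`-doubling: there is `γ ≥ 1` with `μ(B(x,2s)) ≤ γ μ(B(x,s))` for all `x`. -/
def DoublingAt {X : Type*} [PseudoMetricSpace X] [MeasurableSpace X]
    (μ : MeasureTheory.Measure X) (s : ℝ) : Prop :=
  ∃ γ : ℝ, 1 ≤ γ ∧ ∀ x : X,
    μ (closedBall x (2 * s)) ≤ ENNReal.ofReal γ * μ (closedBall x s)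

/-- `X` has the Vitali covering property: for every `A ⊆ X` and every family `𝓑` of
closed balls (coded as center–radius pairs) centered in `A`, with positive radii that
are uniformly bounded, such that every `x ∈ A` is the center of balls of `𝓑` of
arbitrarily small radius, there is a countable pairwise disjoint subfamily `𝓑' ⊆ 𝓑`
with `μ(A \ ⋃ 𝓑') = 0`. -/
def VitaliCoveringProperty (X : Type*) [PseudoMetricSpace X] [MeasurableSpace X]
    (μ : MeasureTheory.Measure X) : Prop :=
  ∀ (A : Set X) (ℬ : Set (X × ℝ)),
    (∀ b ∈ ℬ, b.1 ∈ A ∧ 0 < b.2) →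
    (∃ R : ℝ, ∀ b ∈ ℬ, b.2 ≤ R) →
    (∀ x ∈ A, ∀ ε > 0, ∃ s : ℝ, 0 < s ∧ s ≤ ε ∧ (x, s) ∈ ℬ) →
    ∃ ℬ' ⊆ ℬ, ℬ'.Countable ∧
      (ℬ'.Pairwise fun b b' => Disjoint (closedBall b.1 b.2) (closedBall b'.1 b'.2)) ∧
      μ (A \ ⋃ b ∈ ℬ', closedBall b.1 b.2) = 0

/-- The distribution function `μ_f(t) = μ({x : |f(x)| > t})` of a function `f`. -/
noncomputable def distribFn {X : Type*} [MeasurableSpace X]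
    (μ : MeasureTheory.Measure X) (f : X → ℝ) (t : ℝ) : ENNReal :=
  μ {x : X | t < |f x|}

/-- The decreasing rearrangement `f*(t) = inf{s ≥ 0 : μ_f(s) ≤ t}` of `f`
(with values in `[0,∞]`). -/
noncomputable def rearr {X : Type*} [MeasurableSpace X]
    (μ : MeasureTheory.Measure X) (f : X → ℝ) (t : ℝ) : ENNReal :=
  sInf {s : ENNReal | μ {x : X | s < ENNReal.ofReal |f x|} ≤ ENNReal.ofReal t}

/-- The maximal rearrangement `f**(t) = (1/t) ∫_0^t f*(s) ds`. -/
noncomputable def rearr2 {X : Type*} [MeasurableSpace X]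
    (μ : MeasureTheory.Measure X) (f : X → ℝ) (t : ℝ) : ENNReal :=
  (ENNReal.ofReal t)⁻¹ * ∫⁻ s in Set.Ioc (0 : ℝ) t, rearr μ f s

/-- The Lorentz norm `‖f‖_{p,q}`, for `p, q ∈ [1,∞]`:
`(∫_0^∞ t^{q/p−1} f*(t)^q dt)^{1/q}` if `q < ∞`, and `sup_{t>0} t^{1/p} f*(t)` if
`q = ∞` (with the conventions `q/∞ = 0` and `1/∞ = 0` on the exponents). -/
noncomputable def lorentzNorm {X : Type*} [MeasurableSpace X]
    (μ : MeasureTheory.Measure X) (f : X → ℝ) (p q : ENNReal) : ENNReal :=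
  if q = ⊤ then ⨆ t ∈ Set.Ioi (0 : ℝ), ENNReal.ofReal (t ^ (1 / p.toReal)) * rearr μ f t
  else (∫⁻ t in Set.Ioi (0 : ℝ),
    ENNReal.ofReal (t ^ (q.toReal / p.toReal - 1)) * rearr μ f t ^ q.toReal) ^ (1 / q.toReal)

/-- The Lorentz norm `‖f‖_{(p,q)}`, defined as `‖f‖_{p,q}` with `f**` replacing `f*`. -/
noncomputable def lorentzNorm' {X : Type*} [MeasurableSpace X]
    (μ : MeasureTheory.Measure X) (f : X → ℝ) (p q : ENNReal) : ENNReal :=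
  if q = ⊤ then ⨆ t ∈ Set.Ioi (0 : ℝ), ENNReal.ofReal (t ^ (1 / p.toReal)) * rearr2 μ f t
  else (∫⁻ t in Set.Ioi (0 : ℝ),
    ENNReal.ofReal (t ^ (q.toReal / p.toReal - 1)) * rearr2 μ f t ^ q.toReal) ^ (1 / q.toReal)

section AuxCore

variable {X : Type*} [MeasurableSpace X] {μ : MeasureTheory.Measure X} {f : X → ℝ}

lemma rearr_le_of_distrib {l t : ℝ} (hl : 0 ≤ l)
    (h : μ {x : X | l < |f x|} ≤ ENNReal.ofReal t) : rearr μ f t ≤ ENNReal.ofReal l := by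
  apply sInf_le
  have : {x : X | ENNReal.ofReal l < ENNReal.ofReal |f x|} = {x : X | l < |f x|} := by
    ext x; simp [ENNReal.ofReal_lt_ofReal_iff_of_nonneg hl]
  simpa [this] using h

lemma rearr_le_const {t a : ℝ} (ha : ∀ x, |f x| ≤ a) (_ht : 0 ≤ t) :
    rearr μ f t ≤ ENNReal.ofReal a := by
  apply sInf_le
  have he : {x : X | ENNReal.ofReal a < ENNReal.ofReal |f x|} = ∅ := by
    ext x; simp only [Set.mem_setOf_eq, Set.mem_empty_iff_false, iff_false, not_lt]
    exact ENNReal.ofReal_le_ofReal (ha x)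
  simp [he]

lemma le_rearr {l t : ℝ} (hl : 0 ≤ l)
    (h : ENNReal.ofReal t < μ {x : X | l < |f x|}) : ENNReal.ofReal l ≤ rearr μ f t := by
  apply le_sInf
  intro s hs
  by_contra hlt
  push_neg at hlt
  have hmono : μ {x : X | l < |f x|} ≤ μ {x : X | s < ENNReal.ofReal |f x|} := by
    apply measure_mono
    intro x hx
    exact lt_of_lt_of_le hlt (ENNReal.ofReal_le_ofReal hx.le)
  exact absurd (le_trans hmono hs) (not_le.2 h)

lemma distrib_le_of_rearr_lt {l t : ℝ} (h : rearr μ f t < ENNReal.ofReal l) :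
    μ {x : X | l < |f x|} ≤ ENNReal.ofReal t := by
  obtain ⟨s, hs, hslt⟩ := sInf_lt_iff.mp h
  refine le_trans (measure_mono ?_) hs
  intro x hx
  exact lt_of_lt_of_le hslt (ENNReal.ofReal_le_ofReal hx.le)

lemma rearr_antitone {t t' : ℝ} (h : t ≤ t') : rearr μ f t' ≤ rearr μ f t :=
  sInf_le_sInf (fun s hs => le_trans hs (ENNReal.ofReal_le_ofReal h))

lemma lintegral_ofReal_rpow_Ioc {α : ℝ} (hα : -1 < α) {b : ℝ} (hb : 0 ≤ b) :
    ∫⁻ t in Set.Ioc (0:ℝ) b, ENNReal.ofReal (t ^ α) = ENNReal.ofReal (b ^ (α+1) / (α+1)) := by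
  rw [← MeasureTheory.ofReal_integral_eq_lintegral_ofReal]
  · rw [← intervalIntegral.integral_of_le hb, integral_rpow (Or.inl hα)]
    norm_num [Real.zero_rpow (show α+1 ≠ 0 by linarith)]
  · exact (intervalIntegral.intervalIntegrable_rpow' hα).1
  · filter_upwards [MeasureTheory.ae_restrict_mem measurableSet_Ioc] with t ht
    exact Real.rpow_nonneg ht.1.le α

end AuxCore
section AuxWeak

variable {X : Type*} [MeasurableSpace X] {μ : MeasureTheory.Measure X} {f : X → ℝ}
variable {p q : ENNReal}

/-- constant in `‖f‖_{p,∞} ≤ wkC ‖f‖_{p,q}`. -/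
noncomputable def wkC (p q : ENNReal) : ℝ :=
  if q = ⊤ then 1 else (q.toReal / p.toReal) ^ (1 / q.toReal)

lemma one_le_toReal_of (hq : 1 ≤ q) (hq' : q ≠ ⊤) : 1 ≤ q.toReal := by
  rw [show (1:ℝ) = (1:ENNReal).toReal by simp]
  exact ENNReal.toReal_mono hq' hq

lemma one_lt_toReal_of (hp : 1 < p) (hp' : p ≠ ⊤) : 1 < p.toReal := by
  rw [show (1:ℝ) = (1:ENNReal).toReal by simp]
  exact (ENNReal.toReal_lt_toReal (by simp) hp').mpr hp

lemma wkC_pos (hp : 1 < p) (hp' : p ≠ ⊤) (hq : 1 ≤ q) : 0 < wkC p q := by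
  unfold wkC
  split
  · norm_num
  · next hq' =>
    have h1 : 0 < q.toReal := lt_of_lt_of_le one_pos (one_le_toReal_of hq hq')
    have h2 : 0 < p.toReal := lt_trans one_pos (one_lt_toReal_of hp hp')
    positivity

lemma weak_le_lorentzNorm (hp : 1 < p) (hp' : p ≠ ⊤) (hq : 1 ≤ q) {t : ℝ} (ht : 0 < t) :
    ENNReal.ofReal (t ^ (1 / p.toReal)) * rearr μ f t ≤
      ENNReal.ofReal (wkC p q) * lorentzNorm μ f p q := by
  by_cases hq' : q = ⊤
  · subst hq'
    rw [lorentzNorm, if_pos rfl, wkC, if_pos rfl, ENNReal.ofReal_one, one_mul]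
    exact le_iSup₂ (f := fun t (_ : t ∈ Set.Ioi (0:ℝ)) =>
      ENNReal.ofReal (t ^ (1 / p.toReal)) * rearr μ f t) t ht
  · have hp1 : 1 < p.toReal := one_lt_toReal_of hp hp'
    have hq1 : 1 ≤ q.toReal := one_le_toReal_of hq hq'
    set p' := p.toReal with hp'def
    set q' := q.toReal with hq'def
    have hp0 : 0 < p' := lt_trans one_pos hp1
    have hq0 : 0 < q' := lt_of_lt_of_le one_pos hq1
    have hqp0 : 0 < q' / p' := div_pos hq0 hp0
    have hα : -1 < q' / p' - 1 := by linarith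
    rw [lorentzNorm, if_neg hq', wkC, if_neg hq']
    rcases eq_or_ne (rearr μ f t) ⊤ with htop | hfin
    · -- the integral is infinite
      have hinf : (∫⁻ s in Set.Ioi (0:ℝ),
          ENNReal.ofReal (s ^ (q' / p' - 1)) * rearr μ f s ^ q') = ⊤ := by
        rw [eq_top_iff]
        refine le_trans ?_ (lintegral_mono_set (Set.Ioc_subset_Ioi_self : Set.Ioc (0:ℝ) t ⊆ Set.Ioi 0))
        have hpt : ∀ s ∈ Set.Ioc (0:ℝ) t,
            (⊤:ENNReal) ≤ ENNReal.ofReal (s ^ (q' / p' - 1)) * rearr μ f s ^ q' := by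
          intro s hs
          have h1 : rearr μ f s = ⊤ :=
            eq_top_iff.mpr (htop ▸ rearr_antitone (μ := μ) (f := f) hs.2)
          rw [h1, ENNReal.top_rpow_of_pos hq0, ENNReal.mul_top (by
            simp only [ne_eq, ENNReal.ofReal_eq_zero, not_le]
            exact Real.rpow_pos_of_pos hs.1 _)]
        have hv : MeasureTheory.volume (Set.Ioc (0:ℝ) t) ≠ 0 := by
          simp only [Real.volume_Ioc, ne_eq, ENNReal.ofReal_eq_zero, not_le]
          linarith
        calc (⊤:ENNReal) = ⊤ * (MeasureTheory.volume (Set.Ioc (0:ℝ) t)) := by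
              rw [ENNReal.top_mul hv]
          _ = ∫⁻ _ in Set.Ioc (0:ℝ) t, (⊤:ENNReal) := by rw [MeasureTheory.setLIntegral_const]
          _ ≤ _ := by
              refine MeasureTheory.setLIntegral_mono' measurableSet_Ioc hpt
      rw [hinf, ENNReal.top_rpow_of_pos (by positivity), ENNReal.mul_top (by
        simp only [ne_eq, ENNReal.ofReal_eq_zero, not_le]
        positivity)]
      exact le_top
    · -- main case
      have hfin' : rearr μ f t ^ q' ≠ ⊤ := ENNReal.rpow_ne_top_of_nonneg hq0.le hfin
      have key : rearr μ f t ^ q' * ENNReal.ofReal (t ^ (q' / p') / (q' / p')) ≤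
          ∫⁻ s in Set.Ioi (0:ℝ), ENNReal.ofReal (s ^ (q' / p' - 1)) * rearr μ f s ^ q' := by
        have h6 := lintegral_ofReal_rpow_Ioc hα ht.le
        rw [show q' / p' - 1 + 1 = q' / p' by ring] at h6
        rw [← h6, ← MeasureTheory.lintegral_const_mul' _ _ hfin']
        refine le_trans (MeasureTheory.setLIntegral_mono' measurableSet_Ioc ?_)
          (lintegral_mono_set Set.Ioc_subset_Ioi_self)
        intro s hs
        rw [mul_comm]
        refine mul_le_mul_right ?_ _
        exact ENNReal.rpow_le_rpow (rearr_antitone hs.2) hq0.le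
      have hnorm := ENNReal.rpow_le_rpow key (z := 1/q') (by positivity)
      rw [ENNReal.mul_rpow_of_nonneg _ _ (by positivity),
        ← ENNReal.rpow_mul, mul_one_div, div_self hq0.ne', ENNReal.rpow_one,
        ENNReal.ofReal_rpow_of_nonneg (by positivity) (by positivity)] at hnorm
      have hmul : q' / p' * (1/q') = 1/p' := by
        field_simp
      have hreal : (t ^ (q' / p') / (q' / p')) ^ (1/q') = t ^ (1/p') * (p'/q') ^ (1/q') := by
        rw [div_eq_mul_inv, Real.mul_rpow (Real.rpow_nonneg ht.le _) (inv_nonneg.mpr hqp0.le),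
          ← Real.rpow_mul ht.le, hmul, inv_div]
      rw [hreal] at hnorm
      refine le_trans (le_of_eq ?_) (mul_le_mul_right hnorm _)
      rw [mul_left_comm, ← ENNReal.ofReal_mul (by positivity)]
      have hr2 : (q'/p') ^ (1/q') * (t ^ (1/p') * (p'/q') ^ (1/q')) = t ^ (1/p') := by
        rw [mul_left_comm, ← Real.mul_rpow hqp0.le (by positivity),
          show q'/p' * (p'/q') = 1 by field_simp, Real.one_rpow, mul_one]
      rw [hr2, mul_comm]

end AuxWeak
section AuxUpper

variable {X : Type*} [MeasurableSpace X] {μ : MeasureTheory.Measure X} {f : X → ℝ}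
variable {p q : ENNReal}

/-- A bound for the Lorentz norm of a function whose rearrangement is `≤ a` on `(0,b]`,
`≤ c` on `[b,m]` and `0` beyond `m`. -/
noncomputable def twoLevelBound (p q : ENNReal) (a b c m : ℝ) : ENNReal :=
  if q = ⊤ then ENNReal.ofReal (a * b ^ (1/p.toReal)) + ENNReal.ofReal (c * m ^ (1/p.toReal))
  else (ENNReal.ofReal (a ^ q.toReal * (b ^ (q.toReal/p.toReal) / (q.toReal/p.toReal))) +
        ENNReal.ofReal (c ^ q.toReal * (m ^ (q.toReal/p.toReal) / (q.toReal/p.toReal)))) ^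
          (1/q.toReal)

lemma lorentzNorm_le_two_level (hp : 1 < p) (hp' : p ≠ ⊤) (hq : 1 ≤ q)
    {a b c m : ℝ} (ha : 0 ≤ a) (hc : 0 ≤ c) (hb : 0 ≤ b) (hm : b ≤ m)
    (h1 : ∀ t : ℝ, 0 < t → rearr μ f t ≤ ENNReal.ofReal a)
    (h2 : ∀ t : ℝ, b ≤ t → rearr μ f t ≤ ENNReal.ofReal c)
    (h3 : ∀ t : ℝ, m ≤ t → rearr μ f t = 0) :
    lorentzNorm μ f p q ≤ twoLevelBound p q a b c m := by
  have hp1 : 1 < p.toReal := one_lt_toReal_of hp hp'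
  have hp0 : 0 < p.toReal := lt_trans one_pos hp1
  by_cases hq' : q = ⊤
  · subst hq'
    rw [lorentzNorm, if_pos rfl, twoLevelBound, if_pos rfl]
    refine iSup₂_le ?_
    intro t ht
    replace ht : 0 < t := ht
    rcases le_or_gt t b with htb | htb
    · refine le_trans ?_ le_self_add
      refine le_trans (mul_le_mul' (ENNReal.ofReal_le_ofReal
        (Real.rpow_le_rpow ht.le htb (by positivity))) (h1 t ht)) ?_
      rw [← ENNReal.ofReal_mul (by positivity), mul_comm]
    · rcases le_or_gt t m with htm | htm
      · refine le_trans ?_ le_add_self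
        refine le_trans (mul_le_mul' (ENNReal.ofReal_le_ofReal
          (Real.rpow_le_rpow ht.le htm (by positivity))) (h2 t htb.le)) ?_
        rw [← ENNReal.ofReal_mul (Real.rpow_nonneg (le_trans hb hm) _), mul_comm]
      · rw [h3 t htm.le, mul_zero]
        exact zero_le
  · have hq1 : 1 ≤ q.toReal := one_le_toReal_of hq hq'
    have hq0 : 0 < q.toReal := lt_of_lt_of_le one_pos hq1
    set p' := p.toReal
    set q' := q.toReal
    have hqp0 : 0 < q' / p' := div_pos hq0 hp0
    have hα : -1 < q' / p' - 1 := by linarith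
    have h0m : (0:ℝ) ≤ m := le_trans hb hm
    rw [lorentzNorm, if_neg hq', twoLevelBound, if_neg hq']
    refine ENNReal.rpow_le_rpow ?_ (by positivity)
    have hsplit : Set.Ioi (0:ℝ) = (Set.Ioc 0 b ∪ Set.Ioc b m) ∪ Set.Ioi m := by
      rw [Set.Ioc_union_Ioc_eq_Ioc hb hm, Set.Ioc_union_Ioi_eq_Ioi h0m]
    have hdisj1 : Disjoint (Set.Ioc (0:ℝ) b ∪ Set.Ioc b m) (Set.Ioi m) :=
      Set.disjoint_left.mpr (fun x hx hx' => by
        rcases hx with h | h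
        · exact absurd (le_trans h.2 hm) (not_le.mpr hx')
        · exact absurd h.2 (not_le.mpr hx'))
    have hdisj2 : Disjoint (Set.Ioc (0:ℝ) b) (Set.Ioc b m) :=
      Set.disjoint_left.mpr (fun x hx hx' => absurd hx.2 (not_le.mpr hx'.1))
    rw [hsplit, MeasureTheory.lintegral_union measurableSet_Ioi hdisj1,
      MeasureTheory.lintegral_union measurableSet_Ioc hdisj2]
    have hexp : q' / p' - 1 + 1 = q' / p' := by ring
    have h_ab : (∫⁻ s in Set.Ioc (0:ℝ) b,
        ENNReal.ofReal (s ^ (q' / p' - 1)) * rearr μ f s ^ q') ≤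
        ENNReal.ofReal (a ^ q' * (b ^ (q'/p') / (q'/p'))) := by
      calc (∫⁻ s in Set.Ioc (0:ℝ) b, ENNReal.ofReal (s ^ (q' / p' - 1)) * rearr μ f s ^ q')
          ≤ ∫⁻ s in Set.Ioc (0:ℝ) b,
              ENNReal.ofReal (s ^ (q' / p' - 1)) * ENNReal.ofReal (a ^ q') := by
            refine MeasureTheory.setLIntegral_mono' measurableSet_Ioc (fun s hs => ?_)
            refine mul_le_mul_right ?_ _
            rw [← ENNReal.ofReal_rpow_of_nonneg ha hq0.le]
            exact ENNReal.rpow_le_rpow (h1 s hs.1) hq0.le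
        _ = (∫⁻ s in Set.Ioc (0:ℝ) b, ENNReal.ofReal (s ^ (q' / p' - 1))) *
              ENNReal.ofReal (a ^ q') :=
            MeasureTheory.lintegral_mul_const' _ _ ENNReal.ofReal_ne_top
        _ = ENNReal.ofReal (b ^ (q'/p') / (q'/p')) * ENNReal.ofReal (a ^ q') := by
            rw [lintegral_ofReal_rpow_Ioc hα hb, hexp]
        _ = ENNReal.ofReal (a ^ q' * (b ^ (q'/p') / (q'/p'))) := by
            rw [mul_comm, ← ENNReal.ofReal_mul (by positivity)]
    have h_bm : (∫⁻ s in Set.Ioc b m,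
        ENNReal.ofReal (s ^ (q' / p' - 1)) * rearr μ f s ^ q') ≤
        ENNReal.ofReal (c ^ q' * (m ^ (q'/p') / (q'/p'))) := by
      calc (∫⁻ s in Set.Ioc b m, ENNReal.ofReal (s ^ (q' / p' - 1)) * rearr μ f s ^ q')
          ≤ ∫⁻ s in Set.Ioc b m,
              ENNReal.ofReal (s ^ (q' / p' - 1)) * ENNReal.ofReal (c ^ q') := by
            refine MeasureTheory.setLIntegral_mono' measurableSet_Ioc (fun s hs => ?_)
            refine mul_le_mul_right ?_ _
            rw [← ENNReal.ofReal_rpow_of_nonneg hc hq0.le]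
            exact ENNReal.rpow_le_rpow (h2 s hs.1.le) hq0.le
        _ ≤ ∫⁻ s in Set.Ioc (0:ℝ) m,
              ENNReal.ofReal (s ^ (q' / p' - 1)) * ENNReal.ofReal (c ^ q') :=
            lintegral_mono_set (Set.Ioc_subset_Ioc_left hb)
        _ = (∫⁻ s in Set.Ioc (0:ℝ) m, ENNReal.ofReal (s ^ (q' / p' - 1))) *
              ENNReal.ofReal (c ^ q') :=
            MeasureTheory.lintegral_mul_const' _ _ ENNReal.ofReal_ne_top
        _ = ENNReal.ofReal (m ^ (q'/p') / (q'/p')) * ENNReal.ofReal (c ^ q') := by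
            rw [lintegral_ofReal_rpow_Ioc hα h0m, hexp]
        _ = ENNReal.ofReal (c ^ q' * (m ^ (q'/p') / (q'/p'))) := by
            rw [mul_comm, ← ENNReal.ofReal_mul (by positivity)]
    have h_tail : (∫⁻ s in Set.Ioi m,
        ENNReal.ofReal (s ^ (q' / p' - 1)) * rearr μ f s ^ q') ≤ 0 := by
      calc (∫⁻ s in Set.Ioi m, ENNReal.ofReal (s ^ (q' / p' - 1)) * rearr μ f s ^ q')
          ≤ ∫⁻ _ in Set.Ioi m, (0:ENNReal) := by
            refine MeasureTheory.setLIntegral_mono' measurableSet_Ioi (fun s hs => ?_)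
            rw [h3 s (le_of_lt hs), ENNReal.zero_rpow_of_pos hq0, mul_zero]
        _ = 0 := by simp
    calc _ ≤ (ENNReal.ofReal (a ^ q' * (b ^ (q'/p') / (q'/p'))) +
            ENNReal.ofReal (c ^ q' * (m ^ (q'/p') / (q'/p')))) + 0 :=
          add_le_add (add_le_add h_ab h_bm) h_tail
      _ = _ := by rw [add_zero]

end AuxUpper
section AuxSeq

lemma exists_sep_seq {X : Type*} [MetricSpace X]
    (hub : ¬ Bornology.IsBounded (Set.univ : Set X)) {c : ℝ} (hc : 0 ≤ c) :
    ∃ u : ℕ → X, ∀ i j, i < j → c < dist (u i) (u j) := by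
  have hne : Nonempty X := by
    by_contra h
    rw [not_nonempty_iff] at h
    exact hub (by rw [Set.univ_eq_empty_iff.mpr h]; exact Bornology.isBounded_empty)
  obtain ⟨x0⟩ := hne
  have key : ∀ R : ℝ, ∃ y : X, R < dist x0 y := by
    intro R
    by_contra h
    push_neg at h
    refine hub ((Metric.isBounded_closedBall (x := x0) (r := R)).subset (fun y _ => ?_))
    rw [Metric.mem_closedBall, dist_comm]
    exact h y
  choose v hv using key
  let u : ℕ → X := fun n => Nat.rec x0 (fun _ prev => v (dist x0 prev + c)) n
  have hstep : ∀ n, dist x0 (u n) + c < dist x0 (u (n+1)) := fun n => hv _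
  have hmono : ∀ j i, i < j → dist x0 (u i) + c < dist x0 (u j) := by
    intro j
    induction j with
    | zero => intro i hij; exact absurd hij (Nat.not_lt_zero i)
    | succ j ih =>
      intro i hij
      rcases Nat.lt_succ_iff_lt_or_eq.mp hij with h | h
      · exact lt_of_lt_of_le (ih i h) (le_trans (le_add_of_nonneg_right hc) (hstep j).le)
      · rw [h]; exact hstep j
  refine ⟨u, fun i j hij => ?_⟩
  have h1 := hmono j i hij
  have h2 : dist x0 (u j) ≤ dist x0 (u i) + dist (u i) (u j) := dist_triangle x0 (u i) (u j)
  linarith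

end AuxSeq

section AuxConst

variable {p q : ENNReal}

/-- The uniform Lorentz-norm bound for normalized indicators. -/
noncomputable def indBound (p q : ENNReal) : ENNReal :=
  if q = ⊤ then 1 else ENNReal.ofReal (p.toReal / q.toReal) ^ (1 / q.toReal)

lemma indBound_lt_top : indBound p q < ⊤ := by
  unfold indBound
  split
  · exact ENNReal.one_lt_top
  · exact ENNReal.rpow_lt_top_of_nonneg (by positivity) ENNReal.ofReal_ne_top

lemma twoLevelBound_ind_eq (hp : 1 < p) (hp' : p ≠ ⊤) (hq : 1 ≤ q)
    {b : ℝ} (hb : 0 < b) :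
    twoLevelBound p q (b ^ (-(1/p.toReal))) b 0 b = indBound p q := by
  have hp0 : 0 < p.toReal := lt_trans one_pos (one_lt_toReal_of hp hp')
  by_cases hq' : q = ⊤
  · subst hq'
    rw [twoLevelBound, if_pos rfl, indBound, if_pos rfl]
    rw [zero_mul, ENNReal.ofReal_zero, add_zero,
      ← Real.rpow_add hb, show -(1/p.toReal) + 1/p.toReal = 0 by ring,
      Real.rpow_zero, ENNReal.ofReal_one]
  · have hq0 : 0 < q.toReal := lt_of_lt_of_le one_pos (one_le_toReal_of hq hq')
    rw [twoLevelBound, if_neg hq', indBound, if_neg hq']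
    rw [Real.zero_rpow hq0.ne', zero_mul, ENNReal.ofReal_zero, add_zero]
    congr 2
    rw [← Real.rpow_mul hb.le, mul_div_assoc']
    rw [← Real.rpow_add hb, show -(1/p.toReal) * q.toReal + q.toReal/p.toReal = 0 by ring,
      Real.rpow_zero, one_div_div]

end AuxConst
section AuxNecessity

lemma necessity {X : Type*} [MetricSpace X] [MeasurableSpace X] [BorelSpace X]
    (μ : MeasureTheory.Measure X)
    (hball : ∀ (x : X) (s : ℝ), 0 < s → 0 < μ (closedBall x s) ∧ μ (closedBall x s) < ⊤)
    {r : ℝ} (hr : 0 < r) (hdbl : DoublingAt μ r)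
    {p q : ENNReal} (hp : 1 < p) (hp' : p ≠ ⊤) (hq : 1 ≤ q)
    (hcomp : ∀ F : Set (X → ℝ),
      (∀ f ∈ F, Measurable f ∧ lorentzNorm μ f p q < ⊤) →
      (∃ C : ENNReal, C < ⊤ ∧ ∀ f ∈ F, lorentzNorm μ f p q ≤ C) →
      ∀ ε : ENNReal, 0 < ε → ∃ G : Finset (X → ℝ),
        ∀ f ∈ F, ∃ g ∈ G, lorentzNorm μ (avgOp μ r f - g) p q < ε) :
    Bornology.IsBounded (Set.univ : Set X) := by
  by_contra hub
  obtain ⟨γ, hγ1, hγdb⟩ := hdbl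
  have hγ0 : (0:ℝ) < γ := lt_of_lt_of_le one_pos hγ1
  have hp1 : 1 < p.toReal := one_lt_toReal_of hp hp'
  have hp0 : 0 < p.toReal := lt_trans one_pos hp1
  set p' := p.toReal with hp'def
  set W := wkC p q with hWdef
  have hW : 0 < W := wkC_pos hp hp' hq
  set κ : ℝ := (1/4) * (1/(4*γ)) ^ (1/p') with hκdef
  have hκ0 : 0 < κ := by positivity
  have hlt : W * (κ / (W + 1)) < κ := by
    rw [mul_div_assoc', div_lt_iff₀ (by linarith)]
    nlinarith
  set ε := ENNReal.ofReal (κ / (W + 1)) with hεdef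
  have hε : 0 < ε := ENNReal.ofReal_pos.mpr (by positivity)
  obtain ⟨u, husep⟩ := exists_sep_seq hub (show (0:ℝ) ≤ 6*r by linarith)
  have hM := fun n : ℕ => hball (u n) (2*r) (by linarith)
  have hm := fun n : ℕ => hball (u n) r hr
  set b : ℕ → ℝ := fun n => (μ (closedBall (u n) (2*r))).toReal with hbdef
  have hb0 : ∀ n, 0 < b n := fun n => ENNReal.toReal_pos (hM n).1.ne' (hM n).2.ne
  set cn : ℕ → ℝ := fun n => (b n) ^ (-(1/p')) with hcndef
  have hcn0 : ∀ n, 0 < cn n := fun n => Real.rpow_pos_of_pos (hb0 n) _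
  set f : ℕ → X → ℝ := fun n => (closedBall (u n) (2*r)).indicator (fun _ => cn n)
    with hfdef
  have hfabs : ∀ n x, |f n x| ≤ cn n := by
    intro n x
    simp only [hfdef, Set.indicator]
    split
    · rw [abs_of_nonneg (hcn0 n).le]
    · simpa using (hcn0 n).le
  have hfmeas : ∀ n, Measurable (f n) := fun n =>
    (measurable_const (a := cn n)).indicator measurableSet_closedBall
  have hre1 : ∀ n, ∀ t : ℝ, 0 < t → rearr μ (f n) t ≤ ENNReal.ofReal (cn n) :=
    fun n t ht => rearr_le_const (hfabs n) ht.le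
  have hre0 : ∀ n, ∀ t : ℝ, b n ≤ t → rearr μ (f n) t = 0 := by
    intro n t ht
    refine le_antisymm ?_ (zero_le)
    have h0 : μ {x : X | 0 < |f n x|} ≤ ENNReal.ofReal t := by
      have hsub : {x : X | 0 < |f n x|} ⊆ closedBall (u n) (2*r) := by
        intro x hx
        by_contra hxmem
        simp only [hfdef, Set.mem_setOf_eq, Set.indicator_of_notMem hxmem] at hx
        simp at hx
      refine le_trans (measure_mono hsub) ?_
      rw [← ENNReal.ofReal_toReal (hM n).2.ne]
      exact ENNReal.ofReal_le_ofReal ht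
    simpa using rearr_le_of_distrib le_rfl h0
  have hfnorm : ∀ n, lorentzNorm μ (f n) p q ≤ indBound p q := by
    intro n
    have h := lorentzNorm_le_two_level (μ := μ) (f := f n) hp hp' hq
      (a := cn n) (b := b n) (c := 0) (m := b n)
      (hcn0 n).le le_rfl (hb0 n).le le_rfl (hre1 n)
      (fun t ht => by rw [ENNReal.ofReal_zero, hre0 n t ht]) (hre0 n)
    rwa [twoLevelBound_ind_eq hp hp' hq (hb0 n)] at h
  obtain ⟨G, hG⟩ := hcomp (Set.range f)
    (by rintro g ⟨n, rfl⟩; exact ⟨hfmeas n, lt_of_le_of_lt (hfnorm n) indBound_lt_top⟩)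
    ⟨indBound p q, indBound_lt_top, by rintro g ⟨n, rfl⟩; exact hfnorm n⟩ ε hε
  have hsel : ∀ n, ∃ g ∈ G, lorentzNorm μ (avgOp μ r (f n) - g) p q < ε :=
    fun n => hG (f n) ⟨n, rfl⟩
  set φ : ℕ → {g // g ∈ G} := fun n => ⟨(hsel n).choose, (hsel n).choose_spec.1⟩ with hφdef
  obtain ⟨n, m, hnm, hφeq⟩ := Finite.exists_ne_map_eq_of_infinite φ
  set g : X → ℝ := (hsel n).choose with hgdef
  have hng : lorentzNorm μ (avgOp μ r (f n) - g) p q < ε := (hsel n).choose_spec.2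
  have hgm : (hsel m).choose = g := by
    have h := congrArg Subtype.val hφeq
    exact h.symm
  have hmg : lorentzNorm μ (avgOp μ r (f m) - g) p q < ε := hgm ▸ (hsel m).choose_spec.2
  have hsep : 6*r < dist (u n) (u m) := by
    rcases lt_or_gt_of_ne hnm with h | h
    · exact husep n m h
    · rw [dist_comm]; exact husep m n h
  have hP1 : ∀ x ∈ closedBall (u n) r, avgOp μ r (f n) x = cn n := by
    intro x hx
    have hsub : closedBall x r ⊆ closedBall (u n) (2*r) := by
      intro y hy
      rw [mem_closedBall] at hy hx ⊢
      have h1 := dist_triangle y x (u n)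
      linarith
    simp only [avgOp, hfdef]
    rw [MeasureTheory.setIntegral_indicator measurableSet_closedBall,
      Set.inter_eq_self_of_subset_left hsub, MeasureTheory.setIntegral_const, smul_eq_mul, MeasureTheory.measureReal_def,
      ← mul_assoc, inv_mul_cancel₀
        (ENNReal.toReal_pos (hball x r hr).1.ne' (hball x r hr).2.ne).ne', one_mul]
  have hP2 : ∀ x ∈ closedBall (u n) r, avgOp μ r (f m) x = 0 := by
    intro x hx
    have hdisj : closedBall x r ∩ closedBall (u m) (2*r) = ∅ := by
      rw [Set.eq_empty_iff_forall_notMem]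
      rintro y ⟨hy1, hy2⟩
      rw [mem_closedBall] at hx hy1 hy2
      have t1 : dist (u n) (u m) ≤ dist (u n) x + dist x y + dist y (u m) :=
        dist_triangle4 (u n) x y (u m)
      rw [dist_comm (u n) x, dist_comm x y] at t1
      linarith
    simp only [avgOp, hfdef]
    rw [MeasureTheory.setIntegral_indicator measurableSet_closedBall, hdisj,
      MeasureTheory.setIntegral_empty, mul_zero]
  set mn : ENNReal := μ (closedBall (u n) r) with hmndef
  have hmn0 : mn ≠ 0 := (hm n).1.ne'
  have hmnfin : mn ≠ ⊤ := (hm n).2.ne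
  have hmnt : 0 < mn.toReal := ENNReal.toReal_pos hmn0 hmnfin
  have hmnr : b n ≤ γ * mn.toReal := by
    have h := hγdb (u n)
    calc b n ≤ (ENNReal.ofReal γ * mn).toReal := ENNReal.toReal_mono
          (ENNReal.mul_ne_top ENNReal.ofReal_ne_top hmnfin) h
      _ = γ * mn.toReal := by rw [ENNReal.toReal_mul, ENNReal.toReal_ofReal hγ0.le]
  set U1 : Set X := {x : X | cn n / 4 < |(avgOp μ r (f n) - g) x|} with hU1
  set U2 : Set X := closedBall (u n) r ∩ {x : X | cn n / 4 < |g x|} with hU2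
  have hcover : closedBall (u n) r ⊆ U1 ∪ U2 := by
    intro x hx
    by_cases hcase : cn n / 4 < |(avgOp μ r (f n) - g) x|
    · exact Or.inl hcase
    · refine Or.inr ⟨hx, ?_⟩
      push_neg at hcase
      have h1 : (avgOp μ r (f n) - g) x = cn n - g x := by
        simp [Pi.sub_apply, hP1 x hx]
      rw [h1] at hcase
      have habs' : |cn n| - |g x| ≤ |cn n - g x| := abs_sub_abs_le_abs_sub _ _
      rw [abs_of_pos (hcn0 n)] at habs'
      show cn n / 4 < |g x|
      linarith [hcn0 n]
  have hsum : mn ≤ μ U1 + μ U2 :=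
    le_trans (measure_mono hcover) (measure_union_le _ _)
  have hdich : mn/2 ≤ μ U1 ∨ mn/2 ≤ μ U2 := by
    by_contra h
    push_neg at h
    have h2 := lt_of_le_of_lt hsum (ENNReal.add_lt_add h.1 h.2)
    rw [ENNReal.add_halves] at h2
    exact lt_irrefl _ h2
  have hcontra : ∀ w : X → ℝ, mn/2 ≤ μ {x : X | cn n / 4 < |w x|} →
      lorentzNorm μ w p q < ε → False := by
    intro w hw hwnorm
    set t : ℝ := mn.toReal / 4 with htdef
    have ht0 : 0 < t := by positivity
    have h1 : ENNReal.ofReal t < mn/2 := by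
      rw [show mn/2 = ENNReal.ofReal (mn.toReal/2) from ?_]
      · exact (ENNReal.ofReal_lt_ofReal_iff_of_nonneg ht0.le).mpr (by rw [htdef]; linarith)
      · rw [ENNReal.ofReal_div_of_pos two_pos, ENNReal.ofReal_toReal hmnfin]
        norm_num
    have h2 : ENNReal.ofReal (cn n / 4) ≤ rearr μ w t :=
      le_rearr (by positivity) (lt_of_lt_of_le h1 hw)
    have h3 := weak_le_lorentzNorm (μ := μ) (f := w) hp hp' hq ht0
    have h4 : ENNReal.ofReal (t ^ (1/p') * (cn n / 4)) ≤
        ENNReal.ofReal W * lorentzNorm μ w p q := by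
      rw [ENNReal.ofReal_mul (by positivity)]
      exact le_trans (mul_le_mul' (le_refl _) h2) h3
    have h5 : ENNReal.ofReal κ ≤ ENNReal.ofReal (t ^ (1/p') * (cn n / 4)) := by
      apply ENNReal.ofReal_le_ofReal
      have hbt : b n / (4*γ) ≤ t := by
        rw [htdef, div_le_div_iff₀ (by positivity) (by norm_num)]
        nlinarith
      have h6 : (b n / (4*γ)) ^ (1/p') ≤ t ^ (1/p') :=
        Real.rpow_le_rpow (by positivity) hbt (by positivity)
      have h7 : (b n / (4*γ)) ^ (1/p') = b n ^ (1/p') * (1/(4*γ)) ^ (1/p') := by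
        rw [show b n / (4*γ) = b n * (1/(4*γ)) by ring,
          Real.mul_rpow (hb0 n).le (by positivity)]
      have h8 : b n ^ (1/p') * cn n = 1 := by
        rw [hcndef, ← Real.rpow_add (hb0 n), show 1/p' + -(1/p') = 0 by ring, Real.rpow_zero]
      calc κ = (b n ^ (1/p') * cn n) * ((1/4) * (1/(4*γ)) ^ (1/p')) := by rw [h8, one_mul]
        _ = (b n ^ (1/p') * (1/(4*γ)) ^ (1/p')) * (cn n / 4) := by ring
        _ = (b n / (4*γ)) ^ (1/p') * (cn n / 4) := by rw [h7]
        _ ≤ t ^ (1/p') * (cn n / 4) :=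
            mul_le_mul_of_nonneg_right h6 (by positivity)
    have hfinal : ENNReal.ofReal κ < ENNReal.ofReal κ := by
      calc ENNReal.ofReal κ ≤ ENNReal.ofReal W * lorentzNorm μ w p q := le_trans h5 h4
        _ < ENNReal.ofReal W * ε := by
            exact (ENNReal.mul_lt_mul_iff_right (ENNReal.ofReal_pos.mpr hW).ne' ENNReal.ofReal_ne_top).mpr hwnorm
        _ = ENNReal.ofReal (W * (κ/(W+1))) := by
            rw [hεdef, ← ENNReal.ofReal_mul hW.le]
        _ ≤ ENNReal.ofReal κ := ENNReal.ofReal_le_ofReal hlt.le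
    exact lt_irrefl _ hfinal
  rcases hdich with h | h
  · exact hcontra _ h hng
  · refine hcontra (avgOp μ r (f m) - g) ?_ hmg
    refine le_trans h (measure_mono ?_)
    rintro x ⟨hx1, hx2⟩
    show cn n / 4 < |(avgOp μ r (f m) - g) x|
    have h1 : (avgOp μ r (f m) - g) x = 0 - g x := by simp [Pi.sub_apply, hP2 x hx1]
    rw [h1, zero_sub, abs_neg]
    exact hx2

end AuxNecessity
section AuxHelpers

variable {X : Type*} [MeasurableSpace X] {μ : MeasureTheory.Measure X}
variable {p q : ENNReal}

lemma rearr_eq_zero_of_null (hμ : μ Set.univ = 0) (w : X → ℝ) (t : ℝ) :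
    rearr μ w t = 0 := by
  refine le_antisymm ?_ (zero_le)
  apply sInf_le
  show μ _ ≤ _
  refine le_trans (le_trans (measure_mono (Set.subset_univ _)) (le_of_eq hμ)) (zero_le)

lemma lorentzNorm_eq_zero_of_rearr (hq : 1 ≤ q) (w : X → ℝ)
    (h : ∀ t : ℝ, 0 < t → rearr μ w t = 0) : lorentzNorm μ w p q = 0 := by
  by_cases hq' : q = ⊤
  · subst hq'
    rw [lorentzNorm, if_pos rfl]
    refine le_antisymm (iSup₂_le fun t ht => ?_) (zero_le)
    rw [h t ht, mul_zero]
  · have hq0 : 0 < q.toReal := lt_of_lt_of_le one_pos (one_le_toReal_of hq hq')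
    rw [lorentzNorm, if_neg hq']
    have hint : (∫⁻ t in Set.Ioi (0:ℝ),
        ENNReal.ofReal (t ^ (q.toReal / p.toReal - 1)) * rearr μ w t ^ q.toReal) = 0 := by
      refine le_antisymm ?_ (zero_le)
      refine le_trans (MeasureTheory.setLIntegral_mono' measurableSet_Ioi (fun t ht => ?_))
        (by simp : (∫⁻ _ in Set.Ioi (0:ℝ), (0:ENNReal)) ≤ 0)
      rw [h t ht, ENNReal.zero_rpow_of_pos hq0, mul_zero]
    rw [hint, ENNReal.zero_rpow_of_pos (by positivity)]

lemma twoLevelBound_lt_top {a b c m : ℝ} : twoLevelBound p q a b c m < ⊤ := by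
  unfold twoLevelBound
  split
  · exact ENNReal.add_lt_top.mpr ⟨ENNReal.ofReal_lt_top, ENNReal.ofReal_lt_top⟩
  · exact ENNReal.rpow_lt_top_of_nonneg (by positivity)
      (ENNReal.add_lt_top.mpr ⟨ENNReal.ofReal_lt_top, ENNReal.ofReal_lt_top⟩).ne

lemma exists_large_pow {p' : ℝ} (hp1 : 1 < p') {c e : ℝ} (hc : 0 ≤ c) (he : 0 < e) :
    ∃ Λ : ℝ, 1 ≤ Λ ∧ c * Λ ^ (1 - p') ≤ e := by
  refine ⟨max 1 (((c+1)/e) ^ (1/(p'-1))), le_max_left _ _, ?_⟩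
  set Λ := max 1 (((c+1)/e) ^ (1/(p'-1))) with hΛ
  have hΛ1 : 1 ≤ Λ := le_max_left _ _
  have hΛ0 : 0 < Λ := lt_of_lt_of_le one_pos hΛ1
  have hkey : (c+1)/e ≤ Λ ^ (p'-1) := by
    rcases le_or_gt ((c+1)/e) 1 with hle | hgt
    · exact le_trans hle (Real.one_le_rpow hΛ1 (by linarith))
    · have h1 : ((c+1)/e) ^ (1/(p'-1)) ≤ Λ := le_max_right _ _
      have h2 := Real.rpow_le_rpow (Real.rpow_nonneg (by positivity) _) h1
        (by linarith : (0:ℝ) ≤ p'-1)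
      rwa [← Real.rpow_mul (by positivity), one_div_mul_cancel (by linarith : p'-1 ≠ 0),
        Real.rpow_one] at h2
  have hpow : Λ ^ (1-p') = (Λ ^ (p'-1))⁻¹ := by
    rw [show (1-p') = -(p'-1) by ring, Real.rpow_neg hΛ0.le]
  rw [hpow]
  have hpos : 0 < Λ ^ (p'-1) := Real.rpow_pos_of_pos hΛ0 _
  have h3 : (Λ ^ (p'-1))⁻¹ ≤ e/(c+1) := by
    have h4 := inv_anti₀ (div_pos (by linarith) he) hkey
    rwa [inv_div] at h4
  calc c * (Λ ^ (p'-1))⁻¹ ≤ c * (e/(c+1)) := by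
        refine mul_le_mul_of_nonneg_left h3 hc
    _ ≤ e := by
        rw [mul_div_assoc']
        rw [div_le_iff₀ (by linarith)]
        nlinarith

lemma exists_grid {σ : ℝ} (hσ : 0 < σ) (M : ℝ) :
    ∃ g : Finset ℝ, ∀ v : ℝ, |v| ≤ M → ∃ z ∈ g, |v - z| ≤ σ := by
  refine ⟨Finset.image (fun k : ℤ => (k:ℝ) * σ) (Finset.Icc ⌊-M/σ⌋ ⌈M/σ⌉), ?_⟩
  intro v hv
  have hM0 : 0 ≤ M := le_trans (abs_nonneg v) hv
  have hvl : -M ≤ v := (abs_le.mp hv).1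
  have hvu : v ≤ M := (abs_le.mp hv).2
  refine ⟨(⌊v/σ⌋ : ℝ) * σ, ?_, ?_⟩
  · refine Finset.mem_image_of_mem _ ?_
    rw [Finset.mem_Icc]
    constructor
    · refine Int.floor_le_floor ?_
      gcongr
    · have hchain : ((⌊v/σ⌋:ℤ):ℝ) ≤ ((⌈M/σ⌉:ℤ):ℝ) :=
        le_trans (Int.floor_le _) (le_trans (by gcongr) (Int.le_ceil _))
      exact_mod_cast hchain
  · have h1 : (⌊v/σ⌋ : ℝ) ≤ v/σ := Int.floor_le _
    have h2 : v/σ < ⌊v/σ⌋ + 1 := Int.lt_floor_add_one _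
    have h3 : (⌊v/σ⌋:ℝ) * σ ≤ v := by
      have h5 := mul_le_mul_of_nonneg_right h1 hσ.le
      rwa [div_mul_cancel₀ v hσ.ne'] at h5
    have h4 : v < (⌊v/σ⌋:ℝ) * σ + σ := by
      have h5 := mul_lt_mul_of_pos_right h2 hσ
      rwa [div_mul_cancel₀ v hσ.ne', add_mul, one_mul] at h5
    rw [abs_le]
    constructor <;> linarith

end AuxHelpers
section AuxSmall

variable {p q : ENNReal}

lemma exists_small_params (hp : 1 < p) (hp' : p ≠ ⊤) (hq : 1 ≤ q)
    {M V e : ℝ} (hM : 0 ≤ M) (hV : 0 ≤ V) (he : 0 < e) :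
    ∃ β σ : ℝ, 0 < β ∧ 0 < σ ∧ σ ≤ 1 ∧
      twoLevelBound p q M β σ (max V β) < ENNReal.ofReal e := by
  have hp1 : 1 < p.toReal := one_lt_toReal_of hp hp'
  have hp0 : 0 < p.toReal := by linarith
  set p' := p.toReal with hp'def
  by_cases hq' : q = ⊤
  · subst hq'
    set β : ℝ := min 1 ((e/(4*(M+1))) ^ p') with hβ
    have hβ0 : 0 < β := lt_min one_pos (Real.rpow_pos_of_pos (by positivity) _)
    have hβ1 : β ≤ 1 := min_le_left _ _
    set σ : ℝ := min 1 (e/(4*((V+1) ^ (1/p') + 1))) with hσ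
    have hσ0 : 0 < σ := lt_min one_pos (by positivity)
    refine ⟨β, σ, hβ0, hσ0, min_le_left _ _, ?_⟩
    rw [twoLevelBound, if_pos rfl]
    have hterm1 : M * β ^ (1/p') ≤ e/4 := by
      have h1 : β ^ (1/p') ≤ e/(4*(M+1)) := by
        have h2 : β ≤ (e/(4*(M+1))) ^ p' := min_le_right _ _
        have h3 := Real.rpow_le_rpow hβ0.le h2 (by positivity : (0:ℝ) ≤ 1/p')
        rwa [← Real.rpow_mul (by positivity), mul_one_div, div_self hp0.ne',
          Real.rpow_one] at h3
      calc M * β ^ (1/p') ≤ M * (e/(4*(M+1))) := mul_le_mul_of_nonneg_left h1 hM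
        _ ≤ e/4 := by
            rw [mul_div_assoc', div_le_div_iff₀ (by positivity) (by norm_num)]
            nlinarith
    have hterm2 : σ * (max V β) ^ (1/p') ≤ e/4 := by
      have hmax0 : (0:ℝ) ≤ max V β := le_trans hV (le_max_left V β)
      have hmax : max V β ≤ V + 1 := max_le (by linarith) (by linarith)
      have h1 : (max V β) ^ (1/p') ≤ (V+1) ^ (1/p') :=
        Real.rpow_le_rpow hmax0 hmax (by positivity)
      calc σ * (max V β) ^ (1/p') ≤ σ * (V+1) ^ (1/p') :=
            mul_le_mul_of_nonneg_left h1 hσ0.le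
        _ ≤ (e/(4*((V+1) ^ (1/p') + 1))) * (V+1) ^ (1/p') :=
            mul_le_mul_of_nonneg_right (min_le_right _ _)
              (Real.rpow_nonneg (by linarith) _)
        _ ≤ e/4 := by
            rw [div_mul_eq_mul_div, div_le_div_iff₀ (by positivity) (by norm_num)]
            nlinarith [Real.rpow_nonneg (show (0:ℝ) ≤ V+1 by linarith) (1/p')]
    calc ENNReal.ofReal (M * β ^ (1/p')) + ENNReal.ofReal (σ * (max V β) ^ (1/p'))
        ≤ ENNReal.ofReal (e/4) + ENNReal.ofReal (e/4) :=
          add_le_add (ENNReal.ofReal_le_ofReal hterm1) (ENNReal.ofReal_le_ofReal hterm2)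
      _ = ENNReal.ofReal (e/2) := by
          rw [← ENNReal.ofReal_add (by positivity) (by positivity)]; congr 1; ring
      _ < ENNReal.ofReal e := (ENNReal.ofReal_lt_ofReal_iff he).mpr (by linarith)
  · have hq1 : 1 ≤ q.toReal := one_le_toReal_of hq hq'
    have hq0 : 0 < q.toReal := by linarith
    set q' := q.toReal with hq'def
    have hqp0 : 0 < q'/p' := by positivity
    set tgt : ℝ := (e/2) ^ q' / 2 with htgt
    have htgt0 : 0 < tgt := by positivity
    set D2 : ℝ := (V+1) ^ (q'/p') / (q'/p') with hD2
    have hD2nn : 0 ≤ D2 := by positivity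
    set σ : ℝ := min 1 ((tgt/(D2+1)) ^ (1/q')) with hσ
    have hσ0 : 0 < σ := lt_min one_pos (Real.rpow_pos_of_pos (by positivity) _)
    set β : ℝ := min 1 ((tgt * (q'/p') / (M ^ q' + 1)) ^ (p'/q')) with hβ
    have hMq : 0 ≤ M ^ q' := Real.rpow_nonneg hM _
    have hβ0 : 0 < β := lt_min one_pos (Real.rpow_pos_of_pos (by positivity) _)
    refine ⟨β, σ, hβ0, hσ0, min_le_left _ _, ?_⟩
    rw [twoLevelBound, if_neg hq']
    have hA1 : M ^ q' * (β ^ (q'/p') / (q'/p')) ≤ tgt := by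
      have h2 : β ≤ (tgt * (q'/p') / (M ^ q' + 1)) ^ (p'/q') := min_le_right _ _
      have h3 := Real.rpow_le_rpow hβ0.le h2 (by positivity : (0:ℝ) ≤ q'/p')
      rw [← Real.rpow_mul (by positivity), show p'/q' * (q'/p') = 1 by field_simp,
        Real.rpow_one] at h3
      calc M ^ q' * (β ^ (q'/p') / (q'/p'))
          ≤ M ^ q' * ((tgt * (q'/p') / (M ^ q' + 1)) / (q'/p')) := by
            refine mul_le_mul_of_nonneg_left ?_ hMq
            gcongr
        _ = tgt * (M ^ q' / (M ^ q' + 1)) := by field_simp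
        _ ≤ tgt := mul_le_of_le_one_right htgt0.le
            (by rw [div_le_one (by linarith)]; linarith)
    have hA2 : σ ^ q' * ((max V β) ^ (q'/p') / (q'/p')) ≤ tgt := by
      have hmax0 : (0:ℝ) ≤ max V β := le_trans hV (le_max_left V β)
      have hmax : max V β ≤ V + 1 := max_le (by linarith) (le_trans (min_le_left _ _) (by linarith))
      have h1 : (max V β) ^ (q'/p') / (q'/p') ≤ D2 := by
        rw [hD2]
        exact (div_le_div_iff_of_pos_right hqp0).mpr (Real.rpow_le_rpow hmax0 hmax (by positivity))
      have h2 : σ ^ q' ≤ tgt/(D2+1) := by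
        have h3 := Real.rpow_le_rpow hσ0.le (min_le_right 1 ((tgt/(D2+1)) ^ (1/q'))) (by positivity : (0:ℝ) ≤ q')
        rwa [← Real.rpow_mul (by positivity), one_div_mul_cancel hq0.ne', Real.rpow_one] at h3
      calc σ ^ q' * ((max V β) ^ (q'/p') / (q'/p')) ≤ (tgt/(D2+1)) * D2 := by
            refine mul_le_mul h2 h1 (by positivity) (by positivity)
        _ ≤ tgt := by
            rw [div_mul_eq_mul_div, div_le_iff₀ (by linarith)]
            nlinarith
    calc (ENNReal.ofReal (M ^ q' * (β ^ (q'/p') / (q'/p'))) +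
            ENNReal.ofReal (σ ^ q' * ((max V β) ^ (q'/p') / (q'/p')))) ^ (1/q')
        ≤ (ENNReal.ofReal tgt + ENNReal.ofReal tgt) ^ (1/q') := by
          refine ENNReal.rpow_le_rpow (add_le_add (ENNReal.ofReal_le_ofReal hA1)
            (ENNReal.ofReal_le_ofReal hA2)) (by positivity)
      _ = ENNReal.ofReal (e/2) := by
          rw [← ENNReal.ofReal_add htgt0.le htgt0.le,
            show tgt + tgt = (e/2) ^ q' by rw [htgt]; ring,
            ENNReal.ofReal_rpow_of_nonneg (by positivity) (by positivity : (0:ℝ) ≤ 1/q'),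
            ← Real.rpow_mul (by positivity), mul_one_div, div_self hq0.ne', Real.rpow_one]
      _ < ENNReal.ofReal e := (ENNReal.ofReal_lt_ofReal_iff he).mpr (by linarith)

end AuxSmall
section AuxSufficiency

set_option maxHeartbeats 1000000 in
lemma sufficiency {X : Type*} [MetricSpace X] [MeasurableSpace X] [BorelSpace X]
    (μ : MeasureTheory.Measure X)
    (hball : ∀ (x : X) (s : ℝ), 0 < s → 0 < μ (closedBall x s) ∧ μ (closedBall x s) < ⊤)
    {r : ℝ} (hr : 0 < r)
    (hdbl : ∀ s : ℝ, r ≤ s → DoublingAt μ s)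
    (hvitali : VitaliCoveringProperty X μ)
    (hsym : ∀ x : X,
      Filter.Tendsto (fun y => μ (symmDiff (closedBall x r) (closedBall y r)))
        (nhds x) (nhds 0))
    {p q : ENNReal} (hp : 1 < p) (hp' : p ≠ ⊤) (hq : 1 ≤ q)
    (hbd : Bornology.IsBounded (Set.univ : Set X)) :
    ∀ F : Set (X → ℝ),
      (∀ f ∈ F, Measurable f ∧ lorentzNorm μ f p q < ⊤) →
      (∃ C : ENNReal, C < ⊤ ∧ ∀ f ∈ F, lorentzNorm μ f p q ≤ C) →
      ∀ ε : ENNReal, 0 < ε → ∃ G : Finset (X → ℝ),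
        ∀ f ∈ F, ∃ g ∈ G, lorentzNorm μ (avgOp μ r f - g) p q < ε := by
  intro F hF1 hF2 ε hε
  classical
  by_cases hμ0 : μ Set.univ = 0
  · refine ⟨{fun _ => (0:ℝ)}, fun f hf => ⟨_, Finset.mem_singleton_self _, ?_⟩⟩
    rw [lorentzNorm_eq_zero_of_rearr hq _ (fun t _ => rearr_eq_zero_of_null hμ0 _ t)]
    exact hε
  have hp1 : 1 < p.toReal := one_lt_toReal_of hp hp'
  have hp0 : 0 < p.toReal := by linarith
  set p' := p.toReal with hp'def
  -- X is nonempty and of finite diameter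
  have hXne : Nonempty X := by
    by_contra h
    rw [not_nonempty_iff] at h
    exact hμ0 (by rw [Set.univ_eq_empty_iff.mpr h]; exact measure_empty)
  obtain ⟨x0⟩ := hXne
  obtain ⟨R, hR⟩ : ∃ R : ℝ, ∀ x y : X, dist x y ≤ R := by
    obtain ⟨C, hC⟩ := Metric.isBounded_iff.mp hbd
    exact ⟨C, fun x y => hC trivial trivial⟩
  have hR0 : 0 ≤ R := le_trans (by simp) (hR x0 x0)
  have huniv : ∀ (x : X) (s : ℝ), R ≤ s → closedBall x s = Set.univ := by
    intro x s hs
    refine Set.eq_univ_of_forall (fun y => ?_)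
    rw [mem_closedBall]
    exact le_trans (hR y x) hs
  have hμfin : μ Set.univ < ⊤ := by
    rw [← huniv x0 (max R r) (le_max_left _ _)]
    exact (hball x0 _ (lt_of_lt_of_le hr (le_max_right _ _))).2
  set Vr : ℝ := (μ Set.univ).toReal with hVrdef
  have hVr0 : 0 < Vr := ENNReal.toReal_pos hμ0 hμfin.ne
  have hμV : μ Set.univ = ENNReal.ofReal Vr := (ENNReal.ofReal_toReal hμfin.ne).symm
  -- uniform lower bound on the measure of balls of radius r
  obtain ⟨k, hk⟩ : ∃ k : ℕ, R ≤ 2^k * r := by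
    obtain ⟨k, hk⟩ := pow_unbounded_of_one_lt (R / r) (one_lt_two (α := ℝ))
    refine ⟨k, ?_⟩
    rw [div_lt_iff₀ hr] at hk
    linarith
  have chain : ∀ j : ℕ, ∃ C : ENNReal, C ≠ 0 ∧ C ≠ ⊤ ∧ ∀ x : X,
      μ (closedBall x (2^j * r)) ≤ C * μ (closedBall x r) := by
    intro j
    induction j with
    | zero => exact ⟨1, one_ne_zero, ENNReal.one_ne_top, fun x => by norm_num⟩
    | succ j ih =>
      obtain ⟨C, hC0, hCt, hCle⟩ := ih
      obtain ⟨γ, hγ1, hγle⟩ := hdbl (2^j * r)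
        (le_mul_of_one_le_left hr.le (one_le_pow₀ (one_le_two (α := ℝ))))
      refine ⟨ENNReal.ofReal γ * C, mul_ne_zero
        (by simp only [ne_eq, ENNReal.ofReal_eq_zero, not_le]; linarith) hC0,
        ENNReal.mul_ne_top ENNReal.ofReal_ne_top hCt, fun x => ?_⟩
      calc μ (closedBall x (2^(j+1) * r))
          = μ (closedBall x (2*(2^j * r))) := by rw [show (2:ℝ)^(j+1) * r = 2*(2^j*r) by ring]
        _ ≤ ENNReal.ofReal γ * μ (closedBall x (2^j * r)) := hγle x
        _ ≤ ENNReal.ofReal γ * (C * μ (closedBall x r)) := mul_le_mul_right (hCle x) _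
        _ = (ENNReal.ofReal γ * C) * μ (closedBall x r) := (mul_assoc _ _ _).symm
  obtain ⟨CC, hCC0, hCCt, hCCle⟩ := chain k
  set ηr : ℝ := Vr / CC.toReal with hηrdef
  have hCCt0 : 0 < CC.toReal := ENNReal.toReal_pos hCC0 hCCt
  have hηr0 : 0 < ηr := div_pos hVr0 hCCt0
  have hη : ∀ x : X, ηr ≤ (μ (closedBall x r)).toReal := by
    intro x
    have h1 : μ Set.univ ≤ CC * μ (closedBall x r) := by
      rw [← huniv x (2^k * r) hk]; exact hCCle x
    have h2 : Vr ≤ CC.toReal * (μ (closedBall x r)).toReal := by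
      rw [← ENNReal.toReal_mul]
      exact ENNReal.toReal_mono (ENNReal.mul_ne_top hCCt (hball x r hr).2.ne) h1
    rw [hηrdef, div_le_iff₀ hCCt0]
    linarith
  -- weak-type estimate
  obtain ⟨C₀, hC₀t, hC₀le⟩ := hF2
  have hW := wkC_pos (p := p) (q := q) hp hp' hq
  set K' : ℝ := wkC p q * C₀.toReal + 1 with hK'def
  have hK'0 : 0 < K' := by nlinarith [ENNReal.toReal_nonneg (a := C₀)]
  have hweak : ∀ f ∈ F, ∀ l : ℝ, 0 < l →
      μ {x : X | l < |f x|} ≤ ENNReal.ofReal ((K'/l) ^ p') := by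
    intro f hf l hl
    by_contra hcon
    push_neg at hcon
    set T : ℝ := (K'/l) ^ p' with hT
    have hT0 : 0 < T := Real.rpow_pos_of_pos (by positivity) _
    have h1 : ENNReal.ofReal l ≤ rearr μ f T := le_rearr hl.le hcon
    have h2 := weak_le_lorentzNorm (μ := μ) (f := f) hp hp' hq hT0
    have h3 : ENNReal.ofReal (T ^ (1/p') * l) ≤ ENNReal.ofReal (wkC p q * C₀.toReal) := by
      rw [ENNReal.ofReal_mul (by positivity)]
      refine le_trans (mul_le_mul' le_rfl h1) (le_trans h2 ?_)
      rw [ENNReal.ofReal_mul hW.le]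
      refine mul_le_mul' le_rfl ?_
      rw [ENNReal.ofReal_toReal hC₀t.ne]
      exact hC₀le f hf
    have h4 : T ^ (1/p') * l ≤ wkC p q * C₀.toReal :=
      (ENNReal.ofReal_le_ofReal_iff (mul_nonneg hW.le ENNReal.toReal_nonneg)).mp h3
    have h5 : T ^ (1/p') = K'/l := by
      rw [hT, ← Real.rpow_mul (by positivity), mul_one_div, div_self hp0.ne',
        Real.rpow_one]
    rw [h5, div_mul_cancel₀ _ hl.ne'] at h4
    nlinarith [ENNReal.toReal_nonneg (a := C₀)]
  -- tail estimates
  set TAIL : ℝ → ℝ := fun Λ => K' ^ p' * Λ ^ (1-p') * (1 + 1/(p'-1)) with hTAILdef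
  have hTAILnn : ∀ Λ : ℝ, 0 < Λ → 0 ≤ TAIL Λ := by
    intro Λ hΛ
    have h1 : (0:ℝ) ≤ 1/(p'-1) := one_div_nonneg.mpr (by linarith)
    have h2 : (0:ℝ) ≤ K' ^ p' := Real.rpow_nonneg hK'0.le _
    have h3 : (0:ℝ) ≤ Λ ^ (1-p') := Real.rpow_nonneg hΛ.le _
    rw [hTAILdef]
    exact mul_nonneg (mul_nonneg h2 h3) (by linarith)
  have hJ : ∀ f ∈ F, ∀ Λ : ℝ, 1 ≤ Λ →
      (∫⁻ x in {y : X | Λ < |f y|}, ENNReal.ofReal |f x| ∂μ) ≤ ENNReal.ofReal (TAIL Λ) := by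
    intro f hf Λ hΛ
    have hfm : Measurable f := (hF1 f hf).1
    have hΛ0 : 0 < Λ := lt_of_lt_of_le one_pos hΛ
    have hmeaslt : ∀ l : ℝ, MeasurableSet {a : X | l < |f a|} := fun l =>
      measurableSet_lt measurable_const hfm.abs
    have hlayer : (∫⁻ x in {y : X | Λ < |f y|}, ENNReal.ofReal |f x| ∂μ)
        = ∫⁻ l in Set.Ioi (0:ℝ), (μ.restrict {y : X | Λ < |f y|}) {a : X | l < |f a|} :=
      MeasureTheory.lintegral_eq_lintegral_meas_lt _
        (Filter.Eventually.of_forall fun x => abs_nonneg _) hfm.abs.aemeasurable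
    rw [hlayer, ← Set.Ioc_union_Ioi_eq_Ioi hΛ0.le,
      MeasureTheory.lintegral_union measurableSet_Ioi
        (Set.disjoint_left.mpr (fun x hx hx' => absurd hx.2 (not_le.mpr hx')))]
    have hb1 : (∫⁻ l in Set.Ioc (0:ℝ) Λ, (μ.restrict {y : X | Λ < |f y|}) {a : X | l < |f a|})
        ≤ ENNReal.ofReal ((K'/Λ) ^ p') * ENNReal.ofReal Λ := by
      calc (∫⁻ l in Set.Ioc (0:ℝ) Λ, (μ.restrict {y : X | Λ < |f y|}) {a : X | l < |f a|})
          ≤ ∫⁻ _ in Set.Ioc (0:ℝ) Λ, ENNReal.ofReal ((K'/Λ) ^ p') := by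
            refine MeasureTheory.setLIntegral_mono' measurableSet_Ioc (fun l _ => ?_)
            rw [MeasureTheory.Measure.restrict_apply (hmeaslt l)]
            exact le_trans (measure_mono Set.inter_subset_right) (hweak f hf Λ hΛ0)
        _ = _ := by rw [MeasureTheory.setLIntegral_const, Real.volume_Ioc, sub_zero]
    have hb2 : (∫⁻ l in Set.Ioi Λ, (μ.restrict {y : X | Λ < |f y|}) {a : X | l < |f a|})
        ≤ ENNReal.ofReal (K' ^ p' * (Λ ^ (1-p') / (p'-1))) := by
      calc (∫⁻ l in Set.Ioi Λ, (μ.restrict {y : X | Λ < |f y|}) {a : X | l < |f a|})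
          ≤ ∫⁻ l in Set.Ioi Λ, ENNReal.ofReal ((K'/l) ^ p') := by
            refine MeasureTheory.setLIntegral_mono' measurableSet_Ioi (fun l hl => ?_)
            rw [MeasureTheory.Measure.restrict_apply (hmeaslt l)]
            exact le_trans (measure_mono Set.inter_subset_left)
              (hweak f hf l (lt_trans hΛ0 hl))
        _ = ∫⁻ l in Set.Ioi Λ, ENNReal.ofReal (K' ^ p') * ENNReal.ofReal (l ^ (-p')) := by
            refine MeasureTheory.setLIntegral_congr_fun measurableSet_Ioi
              (fun l hl => ?_)
            rw [Real.div_rpow hK'0.le (le_of_lt (lt_trans hΛ0 hl)),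
              ← ENNReal.ofReal_mul (Real.rpow_nonneg hK'0.le _)]
            congr 1
            rw [Real.rpow_neg (le_of_lt (lt_trans hΛ0 hl)), div_eq_mul_inv]
        _ = ENNReal.ofReal (K' ^ p') * ∫⁻ l in Set.Ioi Λ, ENNReal.ofReal (l ^ (-p')) :=
            MeasureTheory.lintegral_const_mul' _ _ ENNReal.ofReal_ne_top
        _ ≤ ENNReal.ofReal (K' ^ p' * (Λ ^ (1-p') / (p'-1))) := by
            have hint : (∫⁻ l in Set.Ioi Λ, ENNReal.ofReal (l ^ (-p')))
                = ENNReal.ofReal (Λ ^ (1-p') / (p'-1)) := by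
              rw [← MeasureTheory.ofReal_integral_eq_lintegral_ofReal
                (integrableOn_Ioi_rpow_of_lt (by linarith) hΛ0)
                ((MeasureTheory.ae_restrict_mem measurableSet_Ioi).mono
                  (fun l hl => Real.rpow_nonneg (le_of_lt (lt_trans hΛ0 hl)) _))]
              rw [integral_Ioi_rpow_of_lt (by linarith) hΛ0]
              congr 1
              rw [show -p' + 1 = 1 - p' by ring, show (1:ℝ) - p' = -(p'-1) by ring,
                div_neg, neg_div, neg_neg]
            rw [hint, ← ENNReal.ofReal_mul (Real.rpow_nonneg hK'0.le _)]
    refine le_trans (add_le_add hb1 hb2) ?_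
    have hden : Λ ^ p' ≠ 0 := (Real.rpow_pos_of_pos hΛ0 _).ne'
    have hden2 : p' - 1 ≠ 0 := by linarith
    rw [← ENNReal.ofReal_mul (Real.rpow_nonneg (by positivity) _),
      ← ENNReal.ofReal_add (by positivity)
        (mul_nonneg (Real.rpow_nonneg hK'0.le _)
          (div_nonneg (Real.rpow_nonneg hΛ0.le _) (by linarith)))]
    refine ENNReal.ofReal_le_ofReal (le_of_eq ?_)
    rw [hTAILdef]
    have hΛp : Λ ^ (1-p') = Λ / Λ ^ p' := by
      rw [show (1:ℝ)-p' = 1 + (-p') by ring, Real.rpow_add hΛ0, Real.rpow_one,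
        Real.rpow_neg hΛ0.le, div_eq_mul_inv]
    have e1 : (K'/Λ) ^ p' * Λ = K' ^ p' * Λ ^ (1-p') := by
      rw [Real.div_rpow hK'0.le hΛ0.le, hΛp, div_mul_eq_mul_div, mul_div_assoc]
    rw [e1]
    ring
  have hsplitE : ∀ f ∈ F, ∀ (E : Set X), ∀ Λ : ℝ, 1 ≤ Λ →
      (∫⁻ x in E, ENNReal.ofReal |f x| ∂μ) ≤
        ENNReal.ofReal Λ * μ E + ENNReal.ofReal (TAIL Λ) := by
    intro f hf E Λ hΛ
    have hfm := (hF1 f hf).1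
    have hSm : MeasurableSet {y : X | Λ < |f y|} := measurableSet_lt measurable_const hfm.abs
    have hpt : ∀ x, ENNReal.ofReal |f x| ≤ ENNReal.ofReal Λ +
        Set.indicator {y : X | Λ < |f y|} (fun y => ENNReal.ofReal |f y|) x := by
      intro x
      by_cases hx : x ∈ {y : X | Λ < |f y|}
      · rw [Set.indicator_of_mem hx]
        exact self_le_add_left _ _
      · rw [Set.indicator_of_notMem hx, add_zero]
        exact ENNReal.ofReal_le_ofReal (not_lt.mp hx)
    calc (∫⁻ x in E, ENNReal.ofReal |f x| ∂μ)
        ≤ ∫⁻ x in E, (ENNReal.ofReal Λ +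
            Set.indicator {y : X | Λ < |f y|} (fun y => ENNReal.ofReal |f y|) x) ∂μ :=
          MeasureTheory.lintegral_mono hpt
      _ = ENNReal.ofReal Λ * μ E + ∫⁻ x in E,
            Set.indicator {y : X | Λ < |f y|} (fun y => ENNReal.ofReal |f y|) x ∂μ := by
          rw [MeasureTheory.lintegral_add_left measurable_const,
            MeasureTheory.setLIntegral_const]
      _ ≤ ENNReal.ofReal Λ * μ E + ∫⁻ x,
            Set.indicator {y : X | Λ < |f y|} (fun y => ENNReal.ofReal |f y|) x ∂μ :=
          add_le_add_right (MeasureTheory.setLIntegral_le_lintegral _ _) _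
      _ = ENNReal.ofReal Λ * μ E +
            ∫⁻ x in {y : X | Λ < |f y|}, ENNReal.ofReal |f x| ∂μ := by
          rw [MeasureTheory.lintegral_indicator hSm]
      _ ≤ _ := add_le_add_right (hJ f hf Λ hΛ) _
  set Θ : ℝ := Vr + TAIL 1 with hΘdef
  have hΘ0 : 0 < Θ := by have := hTAILnn 1 one_pos; rw [hΘdef]; linarith
  have hL1 : ∀ f ∈ F, (∫⁻ x, ENNReal.ofReal |f x| ∂μ) ≤ ENNReal.ofReal Θ := by
    intro f hf
    have h := hsplitE f hf Set.univ 1 le_rfl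
    rw [MeasureTheory.Measure.restrict_univ] at h
    refine le_trans h ?_
    rw [hΘdef, ENNReal.ofReal_add hVr0.le (hTAILnn 1 one_pos), ENNReal.ofReal_one,
      one_mul, hμV]
  have hInt : ∀ f ∈ F, MeasureTheory.Integrable f μ := by
    intro f hf
    refine ⟨(hF1 f hf).1.aestronglyMeasurable, ?_⟩
    have h : (∫⁻ x, (‖f x‖₊ : ENNReal) ∂μ) < ⊤ := by
      calc (∫⁻ x, (‖f x‖₊ : ENNReal) ∂μ) = ∫⁻ x, ENNReal.ofReal |f x| ∂μ := by
            congr 1; funext x; exact Real.enorm_eq_ofReal_abs _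
        _ ≤ ENNReal.ofReal Θ := hL1 f hf
        _ < ⊤ := ENNReal.ofReal_lt_top
    exact h
  have hIbnd : ∀ f ∈ F, ∀ z : X, |∫ y in closedBall z r, f y ∂μ| ≤ Θ := by
    intro f hf z
    have h1 : |∫ y in closedBall z r, f y ∂μ| ≤ ∫ y in closedBall z r, |f y| ∂μ := by
      simpa [Real.norm_eq_abs] using
        norm_integral_le_integral_norm (μ := μ.restrict (closedBall z r)) f
    refine le_trans h1 ?_
    rw [MeasureTheory.integral_eq_lintegral_of_nonneg_ae
      (Filter.Eventually.of_forall fun y => abs_nonneg _)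
      (hF1 f hf).1.abs.aestronglyMeasurable]
    refine ENNReal.toReal_le_of_le_ofReal hΘ0.le ?_
    exact le_trans (MeasureTheory.setLIntegral_le_lintegral _ _) (hL1 f hf)
  set Mb : ℝ := Θ / ηr with hMbdef
  have hMb0 : 0 < Mb := div_pos hΘ0 hηr0
  have havg : ∀ f ∈ F, ∀ x : X, |avgOp μ r f x| ≤ Mb := by
    intro f hf x
    have hax : ηr ≤ (μ (closedBall x r)).toReal := hη x
    have haxpos : (0:ℝ) < (μ (closedBall x r)).toReal := lt_of_lt_of_le hηr0 hax
    rw [avgOp, abs_mul, abs_of_nonneg (inv_nonneg.mpr haxpos.le)]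
    calc (μ (closedBall x r)).toReal⁻¹ * |∫ y in closedBall x r, f y ∂μ|
        ≤ ηr⁻¹ * Θ := mul_le_mul (inv_anti₀ hηr0 hax) (hIbnd f hf x) (abs_nonneg _)
          (inv_nonneg.mpr hηr0.le)
      _ = Mb := by rw [hMbdef, div_eq_mul_inv, mul_comm]
  have hosc : ∀ f ∈ F, ∀ Λ : ℝ, 1 ≤ Λ → ∀ d : ℝ, 0 ≤ d → ∀ x y : X,
      μ (symmDiff (closedBall x r) (closedBall y r)) ≤ ENNReal.ofReal d →
      |avgOp μ r f x - avgOp μ r f y| ≤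
        ηr⁻¹ * (2*(Λ * d + TAIL Λ)) + (d * Θ) / (ηr * ηr) := by
    intro f hf Λ hΛ d hd x y hsd
    have hfm := (hF1 f hf).1
    have hΛ0 : (0:ℝ) < Λ := by linarith
    set Bx := closedBall x r with hBx
    set By := closedBall y r with hBy
    have hBxm : MeasurableSet Bx := measurableSet_closedBall
    have hBym : MeasurableSet By := measurableSet_closedBall
    set ax := (μ Bx).toReal with haxdef
    set ay := (μ By).toReal with haydef
    have haxl : ηr ≤ ax := hη x
    have hayl : ηr ≤ ay := hη y
    have hax0 : 0 < ax := lt_of_lt_of_le hηr0 haxl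
    have hay0 : 0 < ay := lt_of_lt_of_le hηr0 hayl
    set Ix := ∫ z in Bx, f z ∂μ with hIxdef
    set Iy := ∫ z in By, f z ∂μ with hIydef
    have hSfin : μ (symmDiff Bx By) ≠ ⊤ := (lt_of_le_of_lt hsd ENNReal.ofReal_lt_top).ne
    have hsub1 : Bx \ By ⊆ symmDiff Bx By := by
      rw [Set.symmDiff_def]; exact Set.subset_union_left
    have hsub2 : By \ Bx ⊆ symmDiff Bx By := by
      rw [Set.symmDiff_def]; exact Set.subset_union_right
    have hIdiff : |Ix - Iy| ≤ 2*(Λ * d + TAIL Λ) := by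
      have hIxe : Ix = (∫ z in Bx ∩ By, f z ∂μ) + ∫ z in Bx \ By, f z ∂μ := by
        rw [← MeasureTheory.setIntegral_union
          (Set.disjoint_left.mpr (fun z hz1 hz2 => hz2.2 hz1.2)) (hBxm.diff hBym)
          ((hInt f hf).integrableOn) ((hInt f hf).integrableOn), Set.inter_union_diff]
      have hIye : Iy = (∫ z in Bx ∩ By, f z ∂μ) + ∫ z in By \ Bx, f z ∂μ := by
        rw [← MeasureTheory.setIntegral_union
          (Set.disjoint_left.mpr (fun z hz1 hz2 => hz2.2 hz1.1)) (hBym.diff hBxm)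
          ((hInt f hf).integrableOn) ((hInt f hf).integrableOn), Set.inter_comm,
          Set.inter_union_diff]
      have h2 : |Ix - Iy| ≤ |∫ z in Bx \ By, f z ∂μ| + |∫ z in By \ Bx, f z ∂μ| := by
        rw [hIxe, hIye, show (∫ z in Bx ∩ By, f z ∂μ) + (∫ z in Bx \ By, f z ∂μ)
            - ((∫ z in Bx ∩ By, f z ∂μ) + ∫ z in By \ Bx, f z ∂μ)
            = (∫ z in Bx \ By, f z ∂μ) - ∫ z in By \ Bx, f z ∂μ by ring]
        exact abs_sub _ _
      have habs2 : ∀ (S : Set X), S ⊆ symmDiff Bx By →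
          |∫ z in S, f z ∂μ| ≤ (∫⁻ z in symmDiff Bx By, ENNReal.ofReal |f z| ∂μ).toReal := by
        intro S hSsub
        have h3 : |∫ z in S, f z ∂μ| ≤ ∫ z in S, |f z| ∂μ := by
          simpa [Real.norm_eq_abs] using
            norm_integral_le_integral_norm (μ := μ.restrict S) f
        refine le_trans h3 ?_
        rw [MeasureTheory.integral_eq_lintegral_of_nonneg_ae
          (Filter.Eventually.of_forall fun z => abs_nonneg _)
          hfm.abs.aestronglyMeasurable]
        refine ENNReal.toReal_mono ?_ (lintegral_mono_set hSsub)
        exact (lt_of_le_of_lt (le_trans (MeasureTheory.setLIntegral_le_lintegral _ _)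
          (hL1 f hf)) ENNReal.ofReal_lt_top).ne
      have hup : (∫⁻ z in symmDiff Bx By, ENNReal.ofReal |f z| ∂μ).toReal ≤ Λ * d + TAIL Λ := by
        refine ENNReal.toReal_le_of_le_ofReal
          (add_nonneg (mul_nonneg hΛ0.le hd) (hTAILnn Λ hΛ0)) ?_
        refine le_trans (hsplitE f hf _ Λ hΛ) ?_
        rw [ENNReal.ofReal_add (mul_nonneg hΛ0.le hd) (hTAILnn Λ hΛ0)]
        refine add_le_add ?_ le_rfl
        rw [ENNReal.ofReal_mul hΛ0.le]
        exact mul_le_mul_right hsd _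
      have u1 := le_trans (habs2 _ hsub1) hup
      have u2 := le_trans (habs2 _ hsub2) hup
      linarith [h2]
    have hmeasdiff : |ax - ay| ≤ d := by
      have hBxfin : μ Bx ≠ ⊤ := (hball x r hr).2.ne
      have hByfin : μ By ≠ ⊤ := (hball y r hr).2.ne
      have h1 : μ Bx ≤ μ By + μ (symmDiff Bx By) := by
        refine le_trans (measure_mono ?_) (measure_union_le _ _)
        intro z hz
        by_cases hzy : z ∈ By
        · exact Or.inl hzy
        · exact Or.inr (by rw [Set.mem_symmDiff]; exact Or.inl ⟨hz, hzy⟩)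
      have h2 : μ By ≤ μ Bx + μ (symmDiff Bx By) := by
        refine le_trans (measure_mono ?_) (measure_union_le _ _)
        intro z hz
        by_cases hzx : z ∈ Bx
        · exact Or.inl hzx
        · exact Or.inr (by rw [Set.mem_symmDiff]; exact Or.inr ⟨hz, hzx⟩)
      have hsdr : (μ (symmDiff Bx By)).toReal ≤ d := ENNReal.toReal_le_of_le_ofReal hd hsd
      have h1' : ax ≤ ay + (μ (symmDiff Bx By)).toReal := by
        rw [← ENNReal.toReal_add hByfin hSfin]
        exact ENNReal.toReal_mono (ENNReal.add_ne_top.mpr ⟨hByfin, hSfin⟩) h1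
      have h2' : ay ≤ ax + (μ (symmDiff Bx By)).toReal := by
        rw [← ENNReal.toReal_add hBxfin hSfin]
        exact ENNReal.toReal_mono (ENNReal.add_ne_top.mpr ⟨hBxfin, hSfin⟩) h2
      rw [abs_le]
      constructor <;> linarith
    have hkey : avgOp μ r f x - avgOp μ r f y = ax⁻¹ * (Ix - Iy) + (ax⁻¹ - ay⁻¹) * Iy := by
      rw [show avgOp μ r f x = ax⁻¹ * Ix from rfl, show avgOp μ r f y = ay⁻¹ * Iy from rfl]
      ring
    rw [hkey]
    have hb1 : |ax⁻¹ * (Ix - Iy)| ≤ ηr⁻¹ * (2*(Λ * d + TAIL Λ)) := by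
      rw [abs_mul, abs_of_nonneg (inv_nonneg.mpr hax0.le)]
      exact mul_le_mul (inv_anti₀ hηr0 haxl) hIdiff (abs_nonneg _) (inv_nonneg.mpr hηr0.le)
    have hb2 : |(ax⁻¹ - ay⁻¹) * Iy| ≤ (d * Θ) / (ηr * ηr) := by
      rw [abs_mul]
      have h3 : |ax⁻¹ - ay⁻¹| ≤ d / (ηr * ηr) := by
        rw [show ax⁻¹ - ay⁻¹ = (ay - ax) / (ax * ay) by field_simp, abs_div,
          abs_of_pos (mul_pos hax0 hay0)]
        refine div_le_div₀ hd (by rw [abs_sub_comm]; exact hmeasdiff) (mul_pos hηr0 hηr0)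
          (mul_le_mul haxl hayl hηr0.le (le_trans hηr0.le haxl))
      calc |ax⁻¹ - ay⁻¹| * |Iy| ≤ (d/(ηr*ηr)) * Θ :=
            mul_le_mul h3 (hIbnd f hf y) (abs_nonneg _) (div_nonneg hd (by positivity))
        _ = (d * Θ)/(ηr*ηr) := by ring
    calc |ax⁻¹ * (Ix - Iy) + (ax⁻¹ - ay⁻¹) * Iy|
        ≤ |ax⁻¹ * (Ix - Iy)| + |(ax⁻¹ - ay⁻¹) * Iy| := abs_add_le _ _
      _ ≤ _ := add_le_add hb1 hb2
  -- main case split on ε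
  rcases eq_or_ne ε ⊤ with hT | hεTne
  · -- infinite tolerance: a single zero function suffices
    set g0 : X → ℝ := fun _ => (0:ℝ) with hg0def
    refine ⟨{g0}, fun f hf => ⟨g0, Finset.mem_singleton_self _, ?_⟩⟩
    have hb : ∀ z : X, |(avgOp μ r f - g0) z| ≤ Mb := by
      intro z
      rw [Pi.sub_apply, hg0def]
      simpa using havg f hf z
    have hra : ∀ t : ℝ, 0 < t →
        rearr μ (avgOp μ r f - g0) t ≤ ENNReal.ofReal Mb :=
      fun t ht => rearr_le_const hb ht.le
    have hrc : ∀ t : ℝ, Vr ≤ t → rearr μ (avgOp μ r f - g0) t = 0 := by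
      intro t ht
      refine le_antisymm ?_ (zero_le)
      have h0 : μ {z : X | 0 < |(avgOp μ r f - g0) z|} ≤ ENNReal.ofReal t :=
        le_trans (le_trans (measure_mono (Set.subset_univ _)) (le_of_eq hμV))
          (ENNReal.ofReal_le_ofReal ht)
      simpa using rearr_le_of_distrib le_rfl h0
    have hrb : ∀ t : ℝ, Vr ≤ t →
        rearr μ (avgOp μ r f - g0) t ≤ ENNReal.ofReal Mb :=
      fun t ht => rearr_le_const hb (le_trans hVr0.le ht)
    have hle := lorentzNorm_le_two_level (μ := μ) hp hp' hq (a := Mb) (b := Vr) (c := Mb)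
      (m := Vr) hMb0.le hMb0.le hVr0.le le_rfl hra hrb hrc
    rw [hT]
    exact lt_of_le_of_lt hle twoLevelBound_lt_top
  · set εr := ε.toReal with hεrdef
    have hεr0 : 0 < εr := ENNReal.toReal_pos hε.ne' hεTne
    obtain ⟨β, σ, hβ0, hσ0, hσ1, hsmall⟩ :=
      exists_small_params (p := p) (q := q) hp hp' hq
        (M := 2*Mb+1) (V := Vr) (by linarith) hVr0.le hεr0
    -- choose Λ controlling the tail
    have hc0 : (0:ℝ) ≤ ηr⁻¹*2*(K' ^ p' * (1+1/(p'-1))) := by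
      have h1 : (0:ℝ) ≤ K' ^ p' := Real.rpow_nonneg hK'0.le _
      have h2 : (0:ℝ) ≤ 1+1/(p'-1) := by
        have := one_div_nonneg.mpr (le_of_lt (show (0:ℝ) < p'-1 by linarith))
        linarith
      have h3 : (0:ℝ) ≤ ηr⁻¹ := inv_nonneg.mpr hηr0.le
      exact mul_nonneg (mul_nonneg h3 (by norm_num)) (mul_nonneg h1 h2)
    obtain ⟨Λ, hΛ1, hΛle⟩ := exists_large_pow hp1 hc0 (show (0:ℝ) < σ/8 by linarith)
    have hTΛ : ηr⁻¹*2*TAIL Λ ≤ σ/8 := by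
      calc ηr⁻¹*2*TAIL Λ = (ηr⁻¹*2*(K' ^ p' * (1+1/(p'-1))))*Λ^(1-p') := by
            rw [hTAILdef]; ring
        _ ≤ σ/8 := hΛle
    -- choose δ'
    have hDaux : ∀ D t δ : ℝ, 0 ≤ D → 0 < t → 0 < δ → δ ≤ t/(D+1) → D*δ ≤ t := by
      intro D t δ hD ht hδ hle
      have h1 : D*δ ≤ D*(t/(D+1)) := mul_le_mul_of_nonneg_left hle hD
      have h2 : D*(t/(D+1)) ≤ t := by
        rw [mul_div_assoc', div_le_iff₀ (by linarith)]
        nlinarith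
      linarith
    set δ' : ℝ := min ((σ/8)/(ηr⁻¹*2*Λ + 1)) ((σ/8)/(Θ/(ηr*ηr) + 1)) with hδ'def
    have hδ'0 : 0 < δ' := by
      refine lt_min (div_pos (by linarith) ?_) (div_pos (by linarith) ?_)
      · have : (0:ℝ) ≤ ηr⁻¹*2*Λ := by positivity
        linarith
      · have : (0:ℝ) ≤ Θ/(ηr*ηr) := by positivity
        linarith
    have hd1 : (ηr⁻¹*2*Λ)*δ' ≤ σ/8 :=
      hDaux _ _ _ (by positivity) (by linarith) hδ'0 (min_le_left _ _)
    have hd2 : (Θ/(ηr*ηr))*δ' ≤ σ/8 :=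
      hDaux _ _ _ (by positivity) (by linarith) hδ'0 (min_le_right _ _)
    -- the Vitali family
    set ℬ : Set (X × ℝ) := {b | 0 < b.2 ∧ b.2 ≤ 1 ∧ ∀ y ∈ closedBall b.1 b.2,
      μ (symmDiff (closedBall b.1 r) (closedBall y r)) ≤ ENNReal.ofReal δ'} with hℬdef
    have hfine : ∀ x : X, ∀ e : ℝ, 0 < e → ∃ s, 0 < s ∧ s ≤ e ∧ (x, s) ∈ ℬ := by
      intro x e he
      have hev := (hsym x).eventually_lt_const (ENNReal.ofReal_pos.mpr hδ'0)
      rw [Metric.eventually_nhds_iff] at hev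
      obtain ⟨e₀, he₀, hy⟩ := hev
      refine ⟨min (e₀/2) (min e 1), by positivity, le_trans (min_le_right _ _) (min_le_left _ _),
        by positivity, le_trans (min_le_right _ _) (min_le_right _ _), ?_⟩
      intro y hyb
      refine le_of_lt (hy ?_)
      rw [mem_closedBall] at hyb
      have h1 : min (e₀/2) (min e 1) ≤ e₀/2 := min_le_left _ _
      calc dist y x ≤ e₀/2 := le_trans hyb h1
        _ < e₀ := by linarith
    obtain ⟨ℬ', hsub', hcnt, hdisj', hnull⟩ := hvitali Set.univ ℬ
      (fun b hb => ⟨trivial, hb.1⟩) ⟨1, fun b hb => hb.2.1⟩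
      (fun x _ e he => hfine x e he)
    have hBne : ℬ'.Nonempty := by
      rcases Set.eq_empty_or_nonempty ℬ' with h | h
      · exfalso
        apply hμ0
        rw [h] at hnull
        simpa using hnull
      · exact h
    obtain ⟨ee, hee⟩ := hcnt.exists_eq_range hBne
    set T : ℕ → Set X := fun n => closedBall (ee n).1 (ee n).2 with hTdef
    have hTmeas : ∀ n, MeasurableSet (T n) := fun n => measurableSet_closedBall
    have hcup : μ (Set.univ \ ⋃ n, T n) = 0 := by
      have : (⋃ b ∈ ℬ', closedBall b.1 b.2) = ⋃ n, T n := by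
        rw [hee, Set.biUnion_range]
      rwa [this] at hnull
    have hcell : ∀ n : ℕ, ∀ z ∈ T n,
        μ (symmDiff (closedBall (ee n).1 r) (closedBall z r)) ≤ ENNReal.ofReal δ' := by
      intro n z hz
      have hmem : ee n ∈ ℬ' := by rw [hee]; exact Set.mem_range_self n
      exact (hsub' hmem).2.2 z hz
    set S : ℕ → Set X := fun N => ⋃ j ∈ Finset.range N, T j with hSdef
    have hSmono : Monotone S := by
      intro a b hab
      exact Set.biUnion_subset_biUnion_left (Finset.range_subset_range.mpr hab)
    have hSmeas : ∀ N, MeasurableSet (S N) :=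
      fun N => (Finset.range N).measurableSet_biUnion (fun n _ => hTmeas n)
    have hUeq : (⋃ N, S N) = ⋃ n, T n := by
      ext z
      simp only [hSdef, Set.mem_iUnion, Finset.mem_range, exists_prop]
      constructor
      · rintro ⟨N, j, _, hj⟩
        exact ⟨j, hj⟩
      · rintro ⟨j, hj⟩
        exact ⟨j+1, j, Nat.lt_succ_self j, hj⟩
    have htend := MeasureTheory.tendsto_measure_iUnion_atTop (μ := μ) hSmono
    rw [show (⋃ N, S N) = ⋃ n, T n from hUeq] at htend
    obtain ⟨N, hN⟩ : ∃ N : ℕ, μ (Set.univ \ S N) ≤ ENNReal.ofReal β := by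
      have hAfin : μ (⋃ n, T n) ≠ ⊤ :=
        (lt_of_le_of_lt (measure_mono (Set.subset_univ _)) hμfin).ne
      by_cases hcase : μ (⋃ n, T n) ≤ ENNReal.ofReal β
      · refine ⟨0, ?_⟩
        have hsb : Set.univ \ S 0 ⊆ (Set.univ \ ⋃ n, T n) ∪ (⋃ n, T n) := by
          intro z _
          by_cases h : z ∈ ⋃ n, T n
          exacts [Or.inr h, Or.inl ⟨trivial, h⟩]
        refine le_trans (measure_mono hsb) (le_trans (measure_union_le _ _) ?_)
        rw [hcup, zero_add]
        exact hcase
      · push_neg at hcase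
        have hlt : μ (⋃ n, T n) - ENNReal.ofReal β < μ (⋃ n, T n) :=
          ENNReal.sub_lt_self hAfin
            (lt_of_lt_of_le (ENNReal.ofReal_pos.mpr hβ0) hcase.le).ne'
            (ENNReal.ofReal_pos.mpr hβ0).ne'
        obtain ⟨N, hN'⟩ := (htend.eventually_const_lt hlt).exists
        refine ⟨N, ?_⟩
        have hsb : Set.univ \ S N ⊆ (Set.univ \ ⋃ n, T n) ∪ ((⋃ n, T n) \ S N) := by
          intro z hz
          by_cases h : z ∈ ⋃ n, T n
          exacts [Or.inr ⟨h, hz.2⟩, Or.inl ⟨trivial, h⟩]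
        refine le_trans (measure_mono hsb) (le_trans (measure_union_le _ _) ?_)
        rw [hcup, zero_add]
        have hSsub : S N ⊆ ⋃ n, T n := by
          rw [← hUeq]
          exact Set.subset_iUnion S N
        rw [measure_diff hSsub (hSmeas N).nullMeasurableSet
          (lt_of_le_of_lt (measure_mono (Set.subset_univ _)) hμfin).ne]
        rw [tsub_le_iff_left]
        have he2 := tsub_add_cancel_of_le hcase.le
        have hN'' : μ (⋃ n, T n) - ENNReal.ofReal β < μ (S N) := hN'
        calc μ (⋃ n, T n) = μ (⋃ n, T n) - ENNReal.ofReal β + ENNReal.ofReal β := he2.symm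
          _ ≤ μ (S N) + ENNReal.ofReal β := add_le_add_left hN''.le _
    -- cells
    set Ecell : ℕ → Set X := fun j => T j \ S j with hEdef
    have hEsub : ∀ j, Ecell j ⊆ T j := fun j => Set.diff_subset
    have hTS : ∀ i j : ℕ, i < j → T i ⊆ S j := by
      intro i j hij z hz
      rw [hSdef]
      exact Set.mem_biUnion (Finset.mem_range.mpr hij) hz
    have hEdisj : ∀ i j : ℕ, i ≠ j → ∀ z, z ∈ Ecell i → z ∈ Ecell j → False := by
      intro i j hij z hzi hzj
      rcases lt_or_gt_of_ne hij with h | h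
      · exact hzj.2 (hTS i j h hzi.1)
      · exact hzi.2 (hTS j i h hzj.1)
    have hcover : ∀ z ∈ S N, ∃ j, j < N ∧ z ∈ Ecell j := by
      intro z hz
      rw [hSdef] at hz
      simp only [Set.mem_iUnion, Finset.mem_range, exists_prop] at hz
      obtain ⟨j, hjN, hzj⟩ := hz
      have hex : ∃ i, z ∈ T i := ⟨j, hzj⟩
      refine ⟨Nat.find hex, lt_of_le_of_lt (Nat.find_min' hex hzj) hjN,
        Nat.find_spec hex, ?_⟩
      intro hzS
      rw [hSdef] at hzS
      simp only [Set.mem_iUnion, Finset.mem_range, exists_prop] at hzS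
      obtain ⟨i, hi, hzi⟩ := hzS
      exact Nat.find_min hex hi hzi
    -- value grid
    obtain ⟨grid, hgrid⟩ := exists_grid (show (0:ℝ) < σ/2 by linarith) Mb
    set Φ : (Fin N → ℝ) → X → ℝ :=
      fun v x => ∑ j : Fin N, Set.indicator (Ecell (j:ℕ)) (fun _ => v j) x with hΦdef
    refine ⟨Finset.image (fun v : Fin N → {a // a ∈ grid} => Φ (fun j => (v j : ℝ)))
      Finset.univ, ?_⟩
    intro f hf
    have hval : ∀ j : Fin N, ∃ z ∈ grid, |avgOp μ r f ((ee (j:ℕ)).1) - z| ≤ σ/2 :=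
      fun j => hgrid _ (havg f hf _)
    choose w hwmem hwclose using hval
    refine ⟨Φ (fun j => w j), ?_, ?_⟩
    · exact Finset.mem_image_of_mem _ (Finset.mem_univ (fun j => (⟨w j, hwmem j⟩ : {a // a ∈ grid})))
    · -- norm estimate
      have hΦval : ∀ (x : X) (j : Fin N), x ∈ Ecell (j:ℕ) → Φ (fun j => w j) x = w j := by
        intro x j hx
        have hsum := Finset.sum_eq_single (s := (Finset.univ : Finset (Fin N)))
          (f := fun i : Fin N => Set.indicator (Ecell (i:ℕ)) (fun _ => w i) x) j
          (fun i _ hij => Set.indicator_of_notMem (fun hxi =>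
            hEdisj _ _ (fun hc => hij (Fin.ext (by exact_mod_cast hc))) x hxi hx) _)
          (fun hj => absurd (Finset.mem_univ j) hj)
        calc Φ (fun j => w j) x
            = ∑ i : Fin N, Set.indicator (Ecell (i:ℕ)) (fun _ => w i) x := rfl
          _ = Set.indicator (Ecell (j:ℕ)) (fun _ => w j) x := hsum
          _ = w j := Set.indicator_of_mem hx _
      have hΦ0 : ∀ x : X, (∀ j : Fin N, x ∉ Ecell (j:ℕ)) → Φ (fun j => w j) x = 0 := by
        intro x hx
        calc Φ (fun j => w j) x
            = ∑ i : Fin N, Set.indicator (Ecell (i:ℕ)) (fun _ => w i) x := rfl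
          _ = 0 := Finset.sum_eq_zero (fun i _ => Set.indicator_of_notMem (hx i) _)
      have hwbnd : ∀ j : Fin N, |w j| ≤ Mb + σ/2 := by
        intro j
        have h1 := hwclose j
        have h2 := havg f hf ((ee (j:ℕ)).1)
        have h3 : |w j| ≤ |avgOp μ r f ((ee (j:ℕ)).1)| + |avgOp μ r f ((ee (j:ℕ)).1) - w j| := by
          have := abs_sub_abs_le_abs_sub (w j) (avgOp μ r f ((ee (j:ℕ)).1))
          have h4 := abs_sub_comm (w j) (avgOp μ r f ((ee (j:ℕ)).1))
          linarith [abs_nonneg (w j - avgOp μ r f ((ee (j:ℕ)).1))]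
        linarith
      set u : X → ℝ := avgOp μ r f - Φ (fun j => w j) with hudef
      have hgood : ∀ x ∈ S N, |u x| ≤ σ := by
        intro x hx
        obtain ⟨j, hjN, hxE⟩ := hcover x hx
        set j' : Fin N := ⟨j, hjN⟩ with hj'def
        have hxE' : x ∈ Ecell ((j' : Fin N) : ℕ) := hxE
        have hΦx : Φ (fun j => w j) x = w j' := hΦval x j' hxE'
        have hxT : x ∈ T j := hEsub j hxE
        have hsd := hcell j x hxT
        rw [symmDiff_comm] at hsd
        have hoscx := hosc f hf Λ hΛ1 δ' hδ'0.le x ((ee j).1) hsd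
        have heq : ηr⁻¹*(2*(Λ*δ' + TAIL Λ)) + (δ'*Θ)/(ηr*ηr)
            = (ηr⁻¹*2*Λ)*δ' + ηr⁻¹*2*TAIL Λ + (Θ/(ηr*ηr))*δ' := by
          ring
        rw [heq] at hoscx
        have h5 : |avgOp μ r f x - avgOp μ r f ((ee j).1)| ≤ 3*σ/8 := by linarith
        have h6 := hwclose j'
        have h7 : |avgOp μ r f x - w j'| ≤ 3*σ/8 + σ/2 :=
          le_trans (abs_sub_le _ (avgOp μ r f ((ee j).1)) _) (add_le_add h5 h6)
        have h8 : u x = avgOp μ r f x - w j' := by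
          rw [hudef, Pi.sub_apply, hΦx]
        rw [h8]
        linarith
      have hbnd : ∀ x : X, |u x| ≤ 2*Mb+1 := by
        intro x
        have hΦb : |Φ (fun j => w j) x| ≤ Mb + σ/2 := by
          by_cases hx : ∃ j : Fin N, x ∈ Ecell (j:ℕ)
          · obtain ⟨j, hj⟩ := hx
            rw [hΦval x j hj]
            exact hwbnd j
          · push_neg at hx
            rw [hΦ0 x hx]
            simp only [abs_zero]
            linarith
        have h2 := havg f hf x
        have h3 : |u x| ≤ |avgOp μ r f x| + |Φ (fun j => w j) x| := by
          rw [hudef, Pi.sub_apply]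
          exact abs_sub _ _
        have h4 : σ/2 ≤ 1/2 := by linarith
        linarith
      have hra : ∀ t : ℝ, 0 < t → rearr μ u t ≤ ENNReal.ofReal (2*Mb+1) :=
        fun t ht => rearr_le_const hbnd ht.le
      have hrb : ∀ t : ℝ, β ≤ t → rearr μ u t ≤ ENNReal.ofReal σ := by
        intro t ht
        refine rearr_le_of_distrib hσ0.le ?_
        have hsb : {x : X | σ < |u x|} ⊆ Set.univ \ S N := by
          intro z hz
          refine ⟨trivial, fun hzS => ?_⟩
          exact absurd hz (not_lt.mpr (hgood z hzS))
        exact le_trans (measure_mono hsb) (le_trans hN (ENNReal.ofReal_le_ofReal ht))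
      have hrc : ∀ t : ℝ, max Vr β ≤ t → rearr μ u t = 0 := by
        intro t ht
        refine le_antisymm ?_ (zero_le)
        have h0 : μ {z : X | 0 < |u z|} ≤ ENNReal.ofReal t :=
          le_trans (le_trans (measure_mono (Set.subset_univ _)) (le_of_eq hμV))
            (ENNReal.ofReal_le_ofReal (le_trans (le_max_left _ _) ht))
        simpa using rearr_le_of_distrib le_rfl h0
      have hle := lorentzNorm_le_two_level (μ := μ) hp hp' hq (a := 2*Mb+1) (b := β)
        (c := σ) (m := max Vr β) (by linarith) hσ0.le hβ0.le (le_max_right _ _)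
        hra hrb hrc
      have hfin : ENNReal.ofReal εr = ε := ENNReal.ofReal_toReal hεTne
      calc lorentzNorm μ (avgOp μ r f - Φ (fun j => w j)) p q
          ≤ twoLevelBound p q (2*Mb+1) β σ (max Vr β) := hle
        _ < ENNReal.ofReal εr := hsmall
        _ = ε := hfin




end AuxSufficiency
/-- Let `X` be `s`-doubling with the Vitali covering property for all
`s ≥ r`, with `μ(B(x,r) △ B(y,r)) → 0` as `y → x` for each `x`, and let `p ∈ (1,∞)`,
`q ∈ [1,∞]`. Then the averaging operator `A_r : L^{p,q}(X) → L^{p,q}(X)` is compact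
(the image of every `‖·‖_{p,q}`-bounded subset of `L^{p,q}(X)` is totally bounded in
`‖·‖_{p,q}`) if and only if `X` is bounded. -/
theorem statement_2 {X : Type*} [MetricSpace X] [MeasurableSpace X] [BorelSpace X]
    (μ : Measure X)
    (hball : ∀ (x : X) (s : ℝ), 0 < s → 0 < μ (closedBall x s) ∧ μ (closedBall x s) < ⊤)
    (r : ℝ) (hr : 0 < r)
    (hdbl : ∀ s : ℝ, r ≤ s → DoublingAt μ s)
    (hvitali : VitaliCoveringProperty X μ)
    (hsym : ∀ x : X,
      Tendsto (fun y => μ (symmDiff (closedBall x r) (closedBall y r))) (nhds x) (nhds 0))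
    (p q : ENNReal) (hp : 1 < p) (hp' : p ≠ ⊤) (hq : 1 ≤ q) :
    (∀ F : Set (X → ℝ),
      (∀ f ∈ F, Measurable f ∧ lorentzNorm μ f p q < ⊤) →
      (∃ C : ENNReal, C < ⊤ ∧ ∀ f ∈ F, lorentzNorm μ f p q ≤ C) →
      ∀ ε : ENNReal, 0 < ε → ∃ G : Finset (X → ℝ),
        ∀ f ∈ F, ∃ g ∈ G, lorentzNorm μ (avgOp μ r f - g) p q < ε) ↔
    Bornology.IsBounded (Set.univ : Set X) := by
  constructor
  · intro h
    exact necessity μ hball hr (hdbl r le_rfl) hp hp' hq h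
  · intro hbd
    exact sufficiency μ hball hr hdbl hvitali hsym hp hp' hq hbd
end

section
/- Let (X,d,μ) be a Borel metric measure space in which every closed ball has positive finite measure, and fix r > 0. The following are equivalent: (i) μ(X) < ∞ and inf{μ(B(x,r)) : x ∈ X} > 0; (ii) μ(X) < ∞ and inf{μ(B(x,s)) : x ∈ X} > 0 for every s ≥ r; (iii) X is bounded and s-doubling for every s ≥ r. -/
open MeasureTheory Metric Filter Set


/-- For a Borel metric measure space whose closed balls have positive
finite measure and `r > 0`, the following are equivalent:
(i) `μ(X) < ∞` and `inf_x μ(B(x,r)) > 0`;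
(ii) `μ(X) < ∞` and `inf_x μ(B(x,s)) > 0` for all `s ≥ r`;
(iii) `X` is bounded and `s`-doubling for all `s ≥ r`. -/
theorem statement_5 {X : Type*} [MetricSpace X] [MeasurableSpace X] [BorelSpace X]
    (μ : Measure X)
    (hball : ∀ (x : X) (s : ℝ), 0 < s → 0 < μ (closedBall x s) ∧ μ (closedBall x s) < ⊤)
    (r : ℝ) (hr : 0 < r) :
    ((μ Set.univ < ⊤ ∧ 0 < ⨅ x : X, μ (closedBall x r)) ↔
      (μ Set.univ < ⊤ ∧ ∀ s : ℝ, r ≤ s → 0 < ⨅ x : X, μ (closedBall x s))) ∧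
    ((μ Set.univ < ⊤ ∧ ∀ s : ℝ, r ≤ s → 0 < ⨅ x : X, μ (closedBall x s)) ↔
      (Bornology.IsBounded (Set.univ : Set X) ∧ ∀ s : ℝ, r ≤ s → DoublingAt μ s)) := by
  constructor
  · constructor
    · rintro ⟨hfin, hinf⟩
      refine ⟨hfin, fun s hs => lt_of_lt_of_le hinf (le_iInf fun x => ?_)⟩
      exact (iInf_le (fun x => μ (closedBall x r)) x).trans
        (measure_mono (closedBall_subset_closedBall hs))
    · rintro ⟨hfin, hinf⟩
      exact ⟨hfin, hinf r le_rfl⟩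
  · rcases isEmpty_or_nonempty X with hX | hX
    · have huniv : (Set.univ : Set X) = ∅ := Set.univ_eq_empty_iff.mpr hX
      constructor
      · rintro -
        refine ⟨huniv ▸ Bornology.isBounded_empty, fun s _ => ⟨1, le_rfl, fun x => hX.elim x⟩⟩
      · rintro -
        refine ⟨by simp [huniv], fun s _ => ?_⟩
        simpa using (lt_of_lt_of_le ENNReal.zero_lt_top (le_of_eq (iInf_of_empty _).symm))
    · obtain ⟨x₀⟩ := hX
      constructor
      · rintro ⟨hfin, hinf⟩
        constructor
        · -- boundedness
          by_contra hub
          have hexists : ∀ R : ℝ, ∃ y : X, R < dist y x₀ := by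
            intro R
            by_contra h
            push_neg at h
            exact hub ((isBounded_closedBall (x := x₀) (r := R)).subset
              (fun y _ => h y))
          obtain ⟨f, hf⟩ : ∃ f : ℕ → X,
              ∀ n, dist (f n) x₀ + (2 * r + 1) < dist (f (n + 1)) x₀ := by
            refine ⟨fun n => Nat.rec x₀
              (fun _ p => (hexists (dist p x₀ + (2 * r + 1))).choose) n, fun n => ?_⟩
            exact (hexists _).choose_spec
          have hgap : ∀ m n, m < n → dist (f m) x₀ + (2 * r + 1) ≤ dist (f n) x₀ := by
            intro m n h
            induction n with
            | zero => exact absurd h (Nat.not_lt_zero m)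
            | succ n ih =>
              rcases Nat.lt_succ_iff_lt_or_eq.mp h with h' | rfl
              · have h1 := ih h'
                have h2 := hf n
                linarith
              · exact (hf m).le
          have hdist : ∀ m n, m < n → r + r < dist (f m) (f n) := by
            intro m n h
            have h1 := hgap m n h
            have h2 := dist_triangle (f n) (f m) x₀
            have h3 : dist (f n) (f m) = dist (f m) (f n) := dist_comm _ _
            linarith
          have hdisj : Pairwise (Function.onFun Disjoint (fun n => closedBall (f n) r)) := by
            intro m n hmn
            rcases hmn.lt_or_gt with h | h
            · exact closedBall_disjoint_closedBall (hdist m n h)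
            · exact (closedBall_disjoint_closedBall (hdist n m h)).symm
          have hsum : (∑' n : ℕ, μ (closedBall (f n) r)) ≤ μ Set.univ := by
            rw [← measure_iUnion hdisj (fun n => measurableSet_closedBall)]
            exact measure_mono (subset_univ _)
          have htop : (⊤ : ENNReal) ≤ μ Set.univ := by
            calc (⊤ : ENNReal) = ∑' _ : ℕ, (⨅ x : X, μ (closedBall x r)) :=
                  (ENNReal.tsum_const_eq_top_of_ne_zero (hinf r le_rfl).ne').symm
              _ ≤ ∑' n : ℕ, μ (closedBall (f n) r) :=
                  ENNReal.tsum_le_tsum (fun n => iInf_le _ _)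
              _ ≤ μ Set.univ := hsum
          exact absurd hfin (not_lt.mpr htop)
        · -- doubling
          intro s hs
          set c := ⨅ x : X, μ (closedBall x s) with hc
          have hc0 : 0 < c := hinf s hs
          have hcfin : c ≠ ⊤ := by
            refine ne_top_of_le_ne_top hfin.ne ?_
            exact (iInf_le _ x₀).trans (measure_mono (subset_univ _))
          refine ⟨max 1 ((μ Set.univ / c).toReal), le_max_left _ _, fun x => ?_⟩
          have hdiv_ne_top : μ Set.univ / c ≠ ⊤ :=
            (ENNReal.div_lt_top hfin.ne hc0.ne').ne
          have h1 : μ (closedBall x (2 * s)) ≤ μ Set.univ := measure_mono (subset_univ _)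
          have h2 : μ Set.univ = (μ Set.univ / c) * c :=
            (ENNReal.div_mul_cancel hc0.ne' hcfin).symm
          have h3 : (μ Set.univ / c) ≤ ENNReal.ofReal (max 1 ((μ Set.univ / c).toReal)) :=
            calc μ Set.univ / c = ENNReal.ofReal ((μ Set.univ / c).toReal) :=
                (ENNReal.ofReal_toReal hdiv_ne_top).symm
              _ ≤ ENNReal.ofReal (max 1 ((μ Set.univ / c).toReal)) :=
                ENNReal.ofReal_le_ofReal (le_max_right _ _)
          calc μ (closedBall x (2 * s)) ≤ (μ Set.univ / c) * c := h2 ▸ h1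
            _ ≤ ENNReal.ofReal (max 1 ((μ Set.univ / c).toReal)) * μ (closedBall x s) :=
              mul_le_mul' h3 (iInf_le _ x)
      · rintro ⟨hbdd, hdoub⟩
        obtain ⟨R, hR⟩ := hbdd.subset_closedBall x₀
        have hfin : μ Set.univ < ⊤ := by
          refine lt_of_le_of_lt (measure_mono (hR.trans
            (closedBall_subset_closedBall (le_max_left R 1)))) ?_
          exact (hball x₀ (max R 1) (lt_of_lt_of_le one_pos (le_max_right R 1))).2
        refine ⟨hfin, fun s hs => ?_⟩
        have hs0 : 0 < s := lt_of_lt_of_le hr hs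
        -- doubling constants at each scale
        have H : ∀ j : ℕ, DoublingAt μ ((2 : ℝ) ^ j * s) := by
          intro j
          refine hdoub _ (hs.trans ?_)
          nlinarith [one_le_pow₀ (n := j) (one_le_two (α := ℝ)), hs0]
        -- iterate doubling
        have key : ∀ (k : ℕ) (x : X), μ (closedBall x ((2 : ℝ) ^ k * s)) ≤
            (∏ j ∈ Finset.range k, ENNReal.ofReal (H j).choose) * μ (closedBall x s) := by
          intro k
          induction k with
          | zero => intro x; simp
          | succ k ih =>
            intro x
            have h2k : (2 : ℝ) ^ (k + 1) * s = 2 * ((2 : ℝ) ^ k * s) := by ring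
            rw [h2k]
            calc μ (closedBall x (2 * ((2 : ℝ) ^ k * s)))
                ≤ ENNReal.ofReal (H k).choose * μ (closedBall x ((2 : ℝ) ^ k * s)) :=
                  (H k).choose_spec.2 x
              _ ≤ ENNReal.ofReal (H k).choose *
                  ((∏ j ∈ Finset.range k, ENNReal.ofReal (H j).choose) *
                    μ (closedBall x s)) := mul_le_mul_right (ih x) _
              _ = (∏ j ∈ Finset.range (k + 1), ENNReal.ofReal (H j).choose) *
                    μ (closedBall x s) := by
                  rw [Finset.prod_range_succ]; ring
        -- choose k large enough
        have hRs : ∃ k : ℕ, 2 * R ≤ (2 : ℝ) ^ k * s := by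
          obtain ⟨k, hk⟩ := pow_unbounded_of_one_lt ((2 * R) / s) (one_lt_two (α := ℝ))
          exact ⟨k, by rw [div_lt_iff₀ hs0] at hk; linarith⟩
        obtain ⟨k, hk⟩ := hRs
        set C := ∏ j ∈ Finset.range k, ENNReal.ofReal (H j).choose with hC
        have hCtop : C ≠ ⊤ :=
          (ENNReal.prod_lt_top (fun j _ => ENNReal.ofReal_lt_top)).ne
        have huniv_sub : ∀ x : X, (Set.univ : Set X) ⊆ closedBall x ((2 : ℝ) ^ k * s) := by
          intro x y _
          have h1 : dist y x₀ ≤ R := hR (mem_univ y)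
          have h2 : dist x x₀ ≤ R := hR (mem_univ x)
          have := dist_triangle y x₀ x
          simp only [mem_closedBall]
          rw [dist_comm x₀ x] at this
          linarith
        have hbound : ∀ x : X, μ Set.univ / C ≤ μ (closedBall x s) := by
          intro x
          refine ENNReal.div_le_of_le_mul ?_
          calc μ Set.univ ≤ μ (closedBall x ((2 : ℝ) ^ k * s)) :=
                measure_mono (huniv_sub x)
            _ ≤ C * μ (closedBall x s) := key k x
            _ = μ (closedBall x s) * C := mul_comm _ _
        refine lt_of_lt_of_le ?_ (le_iInf hbound)
        refine ENNReal.div_pos ?_ hCtop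
        exact fun h0 => ((hball x₀ s hs0).1.trans_le
          (measure_mono (subset_univ _))).ne' (h0 ▸ rfl)
end

section
/- Let (X,d,μ) be a Borel metric measure space in which every closed ball has positive finite measure. The following are equivalent: (i) X is totally bounded; (ii) μ(X) < ∞ and inf{μ(B(x,s)) : x ∈ X} > 0 for every s > 0; (iii) X is bounded and s-doubling for every s > 0. -/
open MeasureTheory Metric Filter Set


section Aux

variable {X : Type*} [MetricSpace X] [MeasurableSpace X] [BorelSpace X] (μ : Measure X)

lemma aux_i_to_ii
    (hball : ∀ (x : X) (s : ℝ), 0 < s → 0 < μ (closedBall x s) ∧ μ (closedBall x s) < ⊤)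
    (htb : TotallyBounded (Set.univ : Set X)) :
    μ Set.univ < ⊤ ∧ ∀ s : ℝ, 0 < s → 0 < ⨅ x : X, μ (closedBall x s) := by
  rcases isEmpty_or_nonempty X with hX | hX
  · exact ⟨by simp [Set.univ_eq_empty_iff.mpr hX],
      fun s hs => by haveI := hX; simp [iInf_of_empty]⟩
  constructor
  · obtain ⟨x₀⟩ := hX
    obtain ⟨r, hr⟩ := htb.isBounded.subset_closedBall x₀
    calc μ Set.univ ≤ μ (closedBall x₀ (max r 1)) :=
          measure_mono (hr.trans (closedBall_subset_closedBall (le_max_left _ _)))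
      _ < ⊤ := (hball x₀ _ (lt_of_lt_of_le one_pos (le_max_right r 1))).2
  · intro s hs
    obtain ⟨t, htf, htc⟩ := (totallyBounded_iff.mp htb) (s / 2) (by positivity)
    have hne : htf.toFinset.Nonempty := by
      obtain ⟨x₀⟩ := hX
      obtain ⟨y, hy, -⟩ := Set.mem_iUnion₂.mp (htc (mem_univ x₀))
      exact ⟨y, htf.mem_toFinset.mpr hy⟩
    set c := htf.toFinset.inf' hne (fun y => μ (closedBall y (s / 2))) with hc
    have hcpos : 0 < c := by
      rw [hc, Finset.lt_inf'_iff]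
      intro y _
      exact (hball y (s / 2) (by positivity)).1
    refine lt_of_lt_of_le hcpos (le_iInf fun x => ?_)
    obtain ⟨y, hy, hxy⟩ := Set.mem_iUnion₂.mp (htc (mem_univ x))
    have hxy' : dist x y < s / 2 := mem_ball.mp hxy
    have hsub : closedBall y (s / 2) ⊆ closedBall x s := by
      intro z hz
      simp only [mem_closedBall] at hz ⊢
      calc dist z x ≤ dist z y + dist y x := dist_triangle _ _ _
        _ ≤ s / 2 + s / 2 := add_le_add hz (by rw [dist_comm]; linarith)
        _ = s := by ring
    calc c ≤ μ (closedBall y (s / 2)) := Finset.inf'_le _ (htf.mem_toFinset.mpr hy)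
      _ ≤ μ (closedBall x s) := measure_mono hsub

lemma aux_ii_to_i
    (h1 : μ Set.univ < ⊤)
    (h2 : ∀ s : ℝ, 0 < s → 0 < ⨅ x : X, μ (closedBall x s)) :
    TotallyBounded (Set.univ : Set X) := by
  classical
  by_contra htb
  rw [totallyBounded_iff] at htb
  push_neg at htb
  obtain ⟨ε, hε, hcov⟩ := htb
  have key : ∀ T : Finset X, ∃ x : X, ∀ y ∈ T, ε ≤ dist x y := by
    intro T
    have h := hcov (T : Set X) T.finite_toSet
    rw [Set.not_subset] at h
    obtain ⟨x, -, hx⟩ := h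
    refine ⟨x, fun y hy => ?_⟩
    by_contra hlt
    push_neg at hlt
    exact hx (Set.mem_iUnion₂.mpr ⟨y, Finset.mem_coe.mpr hy, mem_ball.mpr hlt⟩)
  choose F hF using key
  let S : ℕ → Finset X := fun n => Nat.rec ∅ (fun _ s => insert (F s) s) n
  let f : ℕ → X := fun n => F (S n)
  have hS : ∀ n, S (n + 1) = insert (f n) (S n) := fun n => rfl
  have hmono : ∀ {m n : ℕ}, m ≤ n → S m ⊆ S n := by
    intro m n h
    induction h with
    | refl => exact Finset.Subset.refl _
    | step _ ih => exact ih.trans (by rw [hS]; exact Finset.subset_insert _ _)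
  have hsep : ∀ i j : ℕ, i < j → ε ≤ dist (f j) (f i) := by
    intro i j hij
    have hmem : f i ∈ S j := hmono hij (by rw [hS]; exact Finset.mem_insert_self _ _)
    exact hF (S j) (f i) hmem
  set c := ⨅ x : X, μ (closedBall x (ε / 3)) with hc
  have hcpos : 0 < c := h2 (ε / 3) (by positivity)
  have hdisj : Pairwise (Function.onFun Disjoint fun n => closedBall (f n) (ε / 3)) := by
    intro i j hij
    have hd : ε ≤ dist (f i) (f j) := by
      rcases lt_or_gt_of_ne hij with h | h
      · rw [dist_comm]; exact hsep i j h
      · exact hsep j i h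
    exact closedBall_disjoint_closedBall (by linarith)
  have hmeas := measure_iUnion (μ := μ) hdisj (fun n => measurableSet_closedBall)
  have htop : μ (⋃ n, closedBall (f n) (ε / 3)) = ⊤ := by
    rw [hmeas, eq_top_iff]
    calc (⊤ : ENNReal) = ∑' _ : ℕ, c := (ENNReal.tsum_const_eq_top_of_ne_zero hcpos.ne').symm
      _ ≤ _ := ENNReal.tsum_le_tsum fun n => iInf_le _ _
  have hle : (⊤ : ENNReal) ≤ μ Set.univ := by
    rw [← htop]; exact measure_mono (subset_univ _)
  exact h1.not_ge hle

lemma aux_ii_to_doub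
    (hball : ∀ (x : X) (s : ℝ), 0 < s → 0 < μ (closedBall x s) ∧ μ (closedBall x s) < ⊤)
    (h1 : μ Set.univ < ⊤)
    (h2 : ∀ s : ℝ, 0 < s → 0 < ⨅ x : X, μ (closedBall x s))
    (s : ℝ) (hs : 0 < s) : DoublingAt μ s := by
  rcases isEmpty_or_nonempty X with hX | hX
  · exact ⟨1, le_refl 1, fun x => (hX.false x).elim⟩
  obtain ⟨x₀⟩ := hX
  set I := ⨅ x : X, μ (closedBall x s) with hI
  have hIpos : 0 < I := h2 s hs
  have hItop : I ≠ ⊤ := (lt_of_le_of_lt (iInf_le _ x₀) (hball x₀ s hs).2).ne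
  have hdiv : μ Set.univ / I ≠ ⊤ := (ENNReal.div_lt_top h1.ne hIpos.ne').ne
  refine ⟨max 1 ((μ Set.univ / I).toReal), le_max_left _ _, fun x => ?_⟩
  calc μ (closedBall x (2 * s)) ≤ μ Set.univ := measure_mono (subset_univ _)
    _ = (μ Set.univ / I) * I := (ENNReal.div_mul_cancel hIpos.ne' hItop).symm
    _ ≤ ENNReal.ofReal (max 1 ((μ Set.univ / I).toReal)) * I := by
        gcongr
        calc μ Set.univ / I = ENNReal.ofReal ((μ Set.univ / I).toReal) :=
              (ENNReal.ofReal_toReal hdiv).symm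
          _ ≤ _ := ENNReal.ofReal_le_ofReal (le_max_right _ _)
    _ ≤ ENNReal.ofReal (max 1 ((μ Set.univ / I).toReal)) * μ (closedBall x s) := by
        gcongr
        exact iInf_le _ _

lemma aux_iii_to_ii
    (hball : ∀ (x : X) (s : ℝ), 0 < s → 0 < μ (closedBall x s) ∧ μ (closedBall x s) < ⊤)
    (hb : Bornology.IsBounded (Set.univ : Set X))
    (hd : ∀ s : ℝ, 0 < s → DoublingAt μ s) :
    μ Set.univ < ⊤ ∧ ∀ s : ℝ, 0 < s → 0 < ⨅ x : X, μ (closedBall x s) := by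
  rcases isEmpty_or_nonempty X with hX | hX
  · exact ⟨by simp [Set.univ_eq_empty_iff.mpr hX],
      fun s hs => by haveI := hX; simp [iInf_of_empty]⟩
  obtain ⟨x₀⟩ := hX
  obtain ⟨R, hR⟩ := hb.subset_closedBall x₀
  have hR0 : 0 ≤ R := by
    have := hR (mem_univ x₀)
    simpa using this
  have hcover : ∀ x : X, (Set.univ : Set X) ⊆ closedBall x (2 * R) := by
    intro x y _
    have h1 : dist y x₀ ≤ R := hR (mem_univ y)
    have h2 : dist x x₀ ≤ R := hR (mem_univ x)
    simp only [mem_closedBall]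
    calc dist y x ≤ dist y x₀ + dist x₀ x := dist_triangle _ _ _
      _ ≤ R + R := add_le_add h1 (by rw [dist_comm]; exact h2)
      _ = 2 * R := by ring
  have hμtop : μ Set.univ < ⊤ := by
    calc μ Set.univ ≤ μ (closedBall x₀ (max (2 * R) 1)) :=
          measure_mono ((hcover x₀).trans (closedBall_subset_closedBall (le_max_left _ _)))
      _ < ⊤ := (hball x₀ _ (lt_of_lt_of_le one_pos (le_max_right _ 1))).2
  refine ⟨hμtop, fun s hs => ?_⟩
  have key : ∀ k : ℕ, ∃ C : ℝ, 1 ≤ C ∧ ∀ x : X,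
      μ (closedBall x (2 ^ k * s)) ≤ ENNReal.ofReal C * μ (closedBall x s) := by
    intro k
    induction k with
    | zero => exact ⟨1, le_refl 1, fun x => by simp⟩
    | succ k ih =>
      obtain ⟨C, hC1, hC⟩ := ih
      obtain ⟨γ, hγ1, hγ⟩ := hd (2 ^ k * s) (by positivity)
      refine ⟨γ * C, by nlinarith, fun x => ?_⟩
      have h2 : (2 : ℝ) ^ (k + 1) * s = 2 * (2 ^ k * s) := by ring
      rw [h2]
      calc μ (closedBall x (2 * (2 ^ k * s)))
          ≤ ENNReal.ofReal γ * μ (closedBall x (2 ^ k * s)) := hγ x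
        _ ≤ ENNReal.ofReal γ * (ENNReal.ofReal C * μ (closedBall x s)) := by
            gcongr
            exact hC x
        _ = ENNReal.ofReal (γ * C) * μ (closedBall x s) := by
            rw [ENNReal.ofReal_mul (by linarith), mul_assoc]
  obtain ⟨k, hk⟩ := pow_unbounded_of_one_lt ((2 * R) / s) (one_lt_two)
  have hRk : 2 * R ≤ 2 ^ k * s := by
    rw [div_lt_iff₀ hs] at hk
    linarith
  obtain ⟨C, hC1, hC⟩ := key k
  have hCbd : ∀ x : X, μ Set.univ ≤ ENNReal.ofReal C * μ (closedBall x s) := by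
    intro x
    refine le_trans (measure_mono ?_) (hC x)
    exact (hcover x).trans (closedBall_subset_closedBall hRk)
  have hμ0 : 0 < μ Set.univ :=
    lt_of_lt_of_le (hball x₀ s hs).1 (measure_mono (subset_univ _))
  have hC0 : ENNReal.ofReal C ≠ 0 := by
    simp only [ne_eq, ENNReal.ofReal_eq_zero, not_le]
    linarith
  have hdivpos : 0 < μ Set.univ / ENNReal.ofReal C :=
    ENNReal.div_pos hμ0.ne' ENNReal.ofReal_ne_top
  refine lt_of_lt_of_le hdivpos (le_iInf fun x => ?_)
  rw [ENNReal.div_le_iff_le_mul (Or.inl hC0) (Or.inl ENNReal.ofReal_ne_top)]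
  exact (hCbd x).trans (le_of_eq (mul_comm _ _))

end Aux

/-- For a Borel metric measure space whose closed balls have positive
finite measure, the following are equivalent:
(i) `X` is totally bounded;
(ii) `μ(X) < ∞` and `inf_x μ(B(x,s)) > 0` for every `s > 0`;
(iii) `X` is bounded and `s`-doubling for every `s > 0`. -/
theorem statement_6 {X : Type*} [MetricSpace X] [MeasurableSpace X] [BorelSpace X]
    (μ : Measure X)
    (hball : ∀ (x : X) (s : ℝ), 0 < s → 0 < μ (closedBall x s) ∧ μ (closedBall x s) < ⊤) :
    (TotallyBounded (Set.univ : Set X) ↔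
      (μ Set.univ < ⊤ ∧ ∀ s : ℝ, 0 < s → 0 < ⨅ x : X, μ (closedBall x s))) ∧
    ((μ Set.univ < ⊤ ∧ ∀ s : ℝ, 0 < s → 0 < ⨅ x : X, μ (closedBall x s)) ↔
      (Bornology.IsBounded (Set.univ : Set X) ∧ ∀ s : ℝ, 0 < s → DoublingAt μ s)) := by
  refine ⟨⟨fun h => aux_i_to_ii μ hball h, fun h => aux_ii_to_i μ h.1 h.2⟩,
    ⟨fun h => ⟨(aux_ii_to_i μ h.1 h.2).isBounded, fun s hs => aux_ii_to_doub μ hball h.1 h.2 s hs⟩,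
     fun h => aux_iii_to_ii μ hball h.1 h.2⟩⟩
end

section
/- Let (X,d,μ) be a Borel metric measure space in which every closed ball has positive finite measure, fix r > 0, and suppose X is s-doubling and has the Vitali covering property for every s ≥ r. Then there exists a constant c ≥ 2 such that for every measurable function f on X that is integrable on every measurable set of finite measure and for every t > 0, μ_{A_r f}(ct) ≤ (1/t) ∫_{{x ∈ X : |f(x)| > t}} |f(x)| dμ(x), where μ_g(t) = μ({x : |g(x)| > t}) denotes the distribution function. -/
open MeasureTheory Metric Filter Set

/-- If `X` is `s`-doubling and has the Vitali covering property for all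
`s ≥ r`, there is `c ≥ 2` such that for every measurable `f` that is integrable on every
measurable set of finite measure and every `t > 0`,
`μ_{A_r f}(ct) ≤ (1/t) ∫_{{|f| > t}} |f| dμ`. -/
theorem statement_7 {X : Type*} [MetricSpace X] [MeasurableSpace X] [BorelSpace X]
    (μ : Measure X)
    (hball : ∀ (x : X) (s : ℝ), 0 < s → 0 < μ (closedBall x s) ∧ μ (closedBall x s) < ⊤)
    (r : ℝ) (hr : 0 < r)
    (hdbl : ∀ s : ℝ, r ≤ s → DoublingAt μ s)
    (hvitali : VitaliCoveringProperty X μ) :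
    ∃ c : ℝ, 2 ≤ c ∧ ∀ f : X → ℝ, Measurable f →
      (∀ A : Set X, MeasurableSet A → μ A < ⊤ → IntegrableOn f A μ) →
      ∀ t : ℝ, 0 < t →
        μ {x : X | c * t < |avgOp μ r f x|} ≤
          (ENNReal.ofReal t)⁻¹ * ∫⁻ x in {x : X | t < |f x|}, ENNReal.ofReal |f x| ∂μ := by
  obtain ⟨γ, hγ1, hγ⟩ := hdbl r le_rfl
  refine ⟨γ + 1, by linarith, ?_⟩
  intro f hf hint t ht
  have hγt : 0 < γ * t := by positivity
  set S : Set X := {x | t < |f x|} with hS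
  have hSm : MeasurableSet S := measurableSet_lt measurable_const hf.abs
  set ν : Measure X := μ.withDensity (fun x => ENNReal.ofReal |f x|) with hν
  have hmeasf : Measurable fun x => ENNReal.ofReal |f x| := hf.abs.ennreal_ofReal
  have hνapp : ∀ A : Set X, MeasurableSet A →
      ν A = ∫⁻ x in A, ENNReal.ofReal |f x| ∂μ := fun A hA => withDensity_apply _ hA
  set I := ∫⁻ x in S, ENNReal.ofReal |f x| ∂μ with hI
  rcases eq_or_ne I ⊤ with hItop | hIne
  · rw [hItop, ENNReal.mul_top (by simp [ENNReal.inv_ne_zero])]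
    exact le_top
  set E : Set X := {x : X | (γ + 1) * t < |avgOp μ r f x|} with hE
  -- pointwise estimate
  have hpt : ∀ x ∈ E, ENNReal.ofReal (γ * t) * μ (closedBall x r) ≤ ν (closedBall x r ∩ S) := by
    intro x hx
    set B := closedBall x r with hB
    have hBm : MeasurableSet B := measurableSet_closedBall
    obtain ⟨hB0, hBfin⟩ := hball x r hr
    set m := (μ B).toReal with hm
    have hm0 : 0 < m := ENNReal.toReal_pos hB0.ne' hBfin.ne
    have hfi : IntegrableOn f B μ := hint B hBm hBfin
    have h1 : (γ + 1) * t * m < ∫ y in B, |f y| ∂μ := by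
      have havg : |avgOp μ r f x| = m⁻¹ * |∫ y in B, f y ∂μ| := by
        rw [avgOp, abs_mul, abs_of_nonneg (inv_nonneg.2 (by positivity))]
      have := hx
      rw [hE, Set.mem_setOf_eq, havg] at this
      have h2 : (γ + 1) * t * m < |∫ y in B, f y ∂μ| := by
        rw [← lt_div_iff₀ hm0, div_eq_inv_mul] at *
        linarith [this]
      calc (γ + 1) * t * m < |∫ y in B, f y ∂μ| := h2
        _ ≤ ∫ y in B, |f y| ∂μ := by
            simpa using norm_integral_le_integral_norm (μ := μ.restrict B) f
    have h3 : ENNReal.ofReal ((γ + 1) * t * m) ≤ ν B := by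
      rw [hνapp B hBm, ← ofReal_integral_eq_lintegral_ofReal hfi.abs
        (Filter.Eventually.of_forall fun y => abs_nonneg _)]
      exact ENNReal.ofReal_le_ofReal h1.le
    have h4 : ν (B \ S) ≤ ENNReal.ofReal (t * m) := by
      rw [hνapp _ (hBm.diff hSm)]
      calc ∫⁻ y in B \ S, ENNReal.ofReal |f y| ∂μ
          ≤ ∫⁻ _ in B \ S, ENNReal.ofReal t ∂μ := by
            refine setLIntegral_mono measurable_const fun y hy => ?_
            exact ENNReal.ofReal_le_ofReal (not_lt.1 hy.2)
        _ = ENNReal.ofReal t * μ (B \ S) := by rw [setLIntegral_const]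
        _ ≤ ENNReal.ofReal t * μ B := by
            exact mul_le_mul_right (measure_mono Set.diff_subset) _
        _ = ENNReal.ofReal (t * m) := by
            rw [← ENNReal.ofReal_toReal hBfin.ne, ← ENNReal.ofReal_mul ht.le]
    have h5 : ν B = ν (B ∩ S) + ν (B \ S) := (measure_inter_add_diff B hSm).symm
    have h6 : ENNReal.ofReal ((γ + 1) * t * m) ≤ ν (B ∩ S) + ENNReal.ofReal (t * m) := by
      calc ENNReal.ofReal ((γ + 1) * t * m) ≤ ν B := h3
        _ = ν (B ∩ S) + ν (B \ S) := h5
        _ ≤ ν (B ∩ S) + ENNReal.ofReal (t * m) := add_le_add le_rfl h4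
    have h7 : ENNReal.ofReal (γ * t) * μ B = ENNReal.ofReal ((γ + 1) * t * m) - ENNReal.ofReal (t * m) := by
      rw [← ENNReal.ofReal_sub _ (by positivity), ← ENNReal.ofReal_toReal hBfin.ne,
        ← ENNReal.ofReal_mul hγt.le]
      ring_nf
      rfl
    rw [h7]
    exact tsub_le_iff_right.2 h6
  -- Zorn: maximal disjoint family
  set 𝒮 : Set (Set X) := {P : Set X | P ⊆ E ∧
    P.Pairwise fun p q => Disjoint (closedBall p r) (closedBall q r)} with h𝒮
  obtain ⟨P, hPmem, hPmax⟩ : ∃ P, Maximal (· ∈ 𝒮) P := by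
    apply zorn_subset
    intro c hc hchain
    refine ⟨⋃₀ c, ⟨?_, ?_⟩, fun s hs => subset_sUnion_of_mem hs⟩
    · exact sUnion_subset fun s hs => (hc hs).1
    · intro p hp q hq hpq
      obtain ⟨A, hA, hpA⟩ := hp
      obtain ⟨B, hB, hqB⟩ := hq
      rcases hchain.total hA hB with h | h
      · exact (hc hB).2 (h hpA) hqB hpq
      · exact (hc hA).2 hpA (h hqB) hpq
  obtain ⟨hPE, hPdisj⟩ := hPmem
  -- covering
  have hcov : E ⊆ ⋃ p ∈ P, closedBall p (2 * r) := by
    intro x hx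
    have hclaim : ∃ p ∈ P, ¬ Disjoint (closedBall x r) (closedBall p r) := by
      by_cases hxP : x ∈ P
      · exact ⟨x, hxP, fun h => (Set.not_disjoint_iff.2
          ⟨x, mem_closedBall_self hr.le, mem_closedBall_self hr.le⟩) h⟩
      · by_contra hcon
        push_neg at hcon
        have hins : insert x P ∈ 𝒮 := by
          refine ⟨insert_subset hx hPE, ?_⟩
          rw [Set.pairwise_insert]
          exact ⟨hPdisj, fun q hq _ => ⟨hcon q hq, (hcon q hq).symm⟩⟩
        have := hPmax hins (subset_insert x P)
        exact hxP (this (mem_insert x P))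
    obtain ⟨p, hpP, hnd⟩ := hclaim
    obtain ⟨y, hy1, hy2⟩ := Set.not_disjoint_iff.1 hnd
    refine Set.mem_biUnion hpP ?_
    rw [mem_closedBall] at *
    calc dist x p ≤ dist x y + dist y p := dist_triangle x y p
      _ ≤ r + r := add_le_add (by rwa [dist_comm] at hy1) hy2
      _ = 2 * r := by ring
  -- countability
  have hPc : P.Countable := by
    have hcnt := MeasureTheory.Measure.countable_meas_pos_of_disjoint_of_meas_iUnion_ne_top
      (μ := ν) (As := fun p : P => closedBall (p : X) r ∩ S)
      (fun p => measurableSet_closedBall.inter hSm)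
      (fun p q hpq => Disjoint.mono inter_subset_left inter_subset_left
        (hPdisj p.2 q.2 (fun h => hpq (Subtype.ext h))))
      (by
        refine ne_top_of_le_ne_top ?_ (measure_mono (Set.iUnion_subset fun p => inter_subset_right))
        rwa [hνapp S hSm])
    have : {p : P | 0 < ν (closedBall (p : X) r ∩ S)} = Set.univ := by
      refine Set.eq_univ_of_forall fun p => ?_
      have := hpt p (hPE p.2)
      refine lt_of_lt_of_le ?_ this
      exact ENNReal.mul_pos (by simp [ENNReal.ofReal_pos, hγt]) (hball (p : X) r hr).1.ne'
    rw [this, Set.countable_univ_iff] at hcnt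
    exact Set.countable_coe_iff.1 hcnt
  -- final chain
  have hsum1 : μ E ≤ ENNReal.ofReal γ * ∑' p : P, μ (closedBall (p : X) r) := by
    calc μ E ≤ μ (⋃ p ∈ P, closedBall p (2 * r)) := measure_mono hcov
      _ ≤ ∑' p : P, μ (closedBall (p : X) (2 * r)) := measure_biUnion_le μ hPc _
      _ ≤ ∑' p : P, ENNReal.ofReal γ * μ (closedBall (p : X) r) :=
          ENNReal.tsum_le_tsum fun p => hγ (p : X)
      _ = ENNReal.ofReal γ * ∑' p : P, μ (closedBall (p : X) r) := ENNReal.tsum_mul_left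
  have hsum2 : ENNReal.ofReal (γ * t) * ∑' p : P, μ (closedBall (p : X) r) ≤ I := by
    haveI : Countable P := Set.countable_coe_iff.2 hPc
    calc ENNReal.ofReal (γ * t) * ∑' p : P, μ (closedBall (p : X) r)
        = ∑' p : P, ENNReal.ofReal (γ * t) * μ (closedBall (p : X) r) := ENNReal.tsum_mul_left.symm
      _ ≤ ∑' p : P, ν (closedBall (p : X) r ∩ S) :=
          ENNReal.tsum_le_tsum fun p => hpt (p : X) (hPE p.2)
      _ = ν (⋃ p : P, closedBall (p : X) r ∩ S) := by
          rw [measure_iUnion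
            (fun p q hpq => Disjoint.mono inter_subset_left inter_subset_left
              (hPdisj p.2 q.2 (fun h => hpq (Subtype.ext h))))
            (fun p => measurableSet_closedBall.inter hSm)]
      _ ≤ ν S := measure_mono (Set.iUnion_subset fun p => inter_subset_right)
      _ = I := hνapp S hSm
  have hfinal : μ E * ENNReal.ofReal t ≤ I := by
    calc μ E * ENNReal.ofReal t
        ≤ (ENNReal.ofReal γ * ∑' p : P, μ (closedBall (p : X) r)) * ENNReal.ofReal t :=
          mul_le_mul_left hsum1 _
      _ = ENNReal.ofReal (γ * t) * ∑' p : P, μ (closedBall (p : X) r) := by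
          rw [ENNReal.ofReal_mul (by linarith)]; ring
      _ ≤ I := hsum2
  have : μ E ≤ I / ENNReal.ofReal t :=
    (ENNReal.le_div_iff_mul_le (Or.inl (by simp [ENNReal.ofReal_eq_zero]; linarith))
      (Or.inl ENNReal.ofReal_ne_top)).2 hfinal
  rwa [ENNReal.div_eq_inv_mul] at this
end

section
/- Let (X,d,μ) be a Borel metric measure space in which every closed ball has positive finite measure, fix r > 0, and suppose X is s-doubling and has the Vitali covering property for every s ≥ r. Then there exists a constant c ≥ 2 such that for every measurable function f on X that is integrable on every measurable set of finite measure and for every t > 0, (A_r f)*(t) ≤ c f**(t), where g* denotes the decreasing rearrangement and f**(t) = (1/t) ∫_0^t f*(s) ds. -/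
open MeasureTheory Metric Filter Set

open scoped ENNReal NNReal

section AuxLemmas
variable {X : Type*} [MeasurableSpace X] {μ : Measure X} {f : X → ℝ}

variable {X : Type*} [MeasurableSpace X] {μ : Measure X} {f : X → ℝ}

private lemma distrib_anti : Antitone (fun v : ℝ≥0∞ => μ {x | v < ENNReal.ofReal |f x|}) :=
  fun v w hvw => measure_mono fun x hx => lt_of_le_of_lt hvw hx

private lemma rearr_anti : Antitone (rearr μ f) := fun s t hst =>
  sInf_le_sInf fun v hv => le_trans hv (ENNReal.ofReal_le_ofReal hst)

private lemma rearr_mem (t : ℝ) (h : rearr μ f t < ⊤) :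
    μ {x | rearr μ f t < ENNReal.ofReal |f x|} ≤ ENNReal.ofReal t := by
  set a := rearr μ f t with ha
  have key : ∀ n : ℕ, μ {x | a + (n : ℝ≥0∞)⁻¹ < ENNReal.ofReal |f x|} ≤ ENNReal.ofReal t := by
    intro n
    have hn0 : ((n : ℝ≥0∞))⁻¹ ≠ 0 := ENNReal.inv_ne_zero.mpr (ENNReal.natCast_ne_top n)
    have hlt : a < a + (n : ℝ≥0∞)⁻¹ := ENNReal.lt_add_right h.ne hn0
    obtain ⟨v, hv, hv2⟩ := sInf_lt_iff.mp (lt_of_eq_of_lt ha hlt)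
    exact le_trans (distrib_anti hv2.le) hv
  have hsub : {x | a < ENNReal.ofReal |f x|} ⊆
      ⋃ n : ℕ, {x | a + (n : ℝ≥0∞)⁻¹ < ENNReal.ofReal |f x|} := by
    intro x hx
    have hne : ENNReal.ofReal |f x| - a ≠ 0 := by
      rw [ne_eq, tsub_eq_zero_iff_le]; exact not_le.mpr hx
    obtain ⟨n, hn⟩ := ENNReal.exists_inv_nat_lt hne
    refine mem_iUnion.mpr ⟨n, ?_⟩
    have := ENNReal.add_lt_add_left h.ne hn
    rwa [add_tsub_cancel_of_le (le_of_lt hx)] at this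
  have hmono : Monotone (fun n : ℕ => {x | a + (n : ℝ≥0∞)⁻¹ < ENNReal.ofReal |f x|}) := by
    intro n m hnm x hx
    exact lt_of_le_of_lt (add_le_add_right (ENNReal.inv_le_inv.mpr (Nat.cast_le.mpr hnm)) a) hx
  calc μ {x | a < ENNReal.ofReal |f x|}
      ≤ μ (⋃ n : ℕ, {x | a + (n : ℝ≥0∞)⁻¹ < ENNReal.ofReal |f x|}) := measure_mono hsub
    _ = ⨆ n : ℕ, μ {x | a + (n : ℝ≥0∞)⁻¹ < ENNReal.ofReal |f x|} :=
        (hmono.directed_le).measure_iUnion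
    _ ≤ ENNReal.ofReal t := iSup_le key

private lemma lt_rearr_iff {t : ℝ} {v : ℝ≥0∞} :
    v < rearr μ f t ↔ ENNReal.ofReal t < μ {x | v < ENNReal.ofReal |f x|} := by
  constructor
  · intro h
    by_contra hc
    push_neg at hc
    have h2 : rearr μ f t ≤ v := sInf_le hc
    exact absurd h2 (not_le.mpr h)
  · intro h
    by_contra hc
    push_neg at hc
    rcases lt_or_eq_of_le (le_top : rearr μ f t ≤ ⊤) with hfin | htop
    · have h1 := rearr_mem (μ := μ) (f := f) t hfin
      have h2 : μ {x | v < ENNReal.ofReal |f x|} ≤ ENNReal.ofReal t :=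
        le_trans (distrib_anti hc) h1
      exact absurd h2 (not_le.mpr h)
    · rw [htop] at hc
      have hv : v = ⊤ := top_unique hc
      have hemp : {x | v < ENNReal.ofReal |f x|} = (∅ : Set X) :=
        eq_empty_iff_forall_notMem.mpr fun x hx => by
          simp only [Set.mem_setOf_eq, hv] at hx
          exact not_top_lt hx
      rw [hemp, measure_empty] at h
      exact (not_lt.mpr zero_le) h


private lemma key_HL (hf : Measurable f) {t : ℝ} (ht : 0 < t)
    {E : Set X} (hE : MeasurableSet E) (hEt : μ E ≤ ENNReal.ofReal t) :
    ∫⁻ x in E, ENNReal.ofReal |f x| ∂μ ≤ ∫⁻ s in Ioc (0 : ℝ) t, rearr μ f s := by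
  set M : ℝ → ℝ≥0∞ := fun u => μ {x | u < |f x|} with hM
  have hManti : Antitone M := fun u v huv =>
    measure_mono fun x hx => lt_of_le_of_lt huv hx
  have hMmeas : Measurable M := hManti.measurable
  -- the relation between M and the ENNReal-level distribution, for u ≥ 0
  have hMeq : ∀ u : ℝ, 0 ≤ u → {x | ENNReal.ofReal u < ENNReal.ofReal |f x|} = {x | u < |f x|} := by
    intro u hu
    ext x
    simp only [mem_setOf_eq, ENNReal.ofReal_lt_ofReal_iff_of_nonneg hu]
  set D : Set (ℝ × ℝ) := {p | ENNReal.ofReal p.1 < M p.2} with hD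
  have hDmeas : MeasurableSet D :=
    measurableSet_lt (ENNReal.measurable_ofReal.comp measurable_fst)
      (hMmeas.comp measurable_snd)
  -- Step 0: layer cake for the LHS
  have step0 : ∫⁻ x in E, ENNReal.ofReal |f x| ∂μ
      = ∫⁻ u in Ioi (0 : ℝ), (μ.restrict E) {x | u < |f x|} := by
    exact lintegral_eq_lintegral_meas_lt (μ.restrict E)
      (ae_of_all _ fun x => abs_nonneg (f x)) (hf.abs.aemeasurable)
  have hsetmeas : ∀ u : ℝ, MeasurableSet {x | u < |f x|} := fun u =>
    measurableSet_lt measurable_const hf.abs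
  have step1 : ∀ u : ℝ, (μ.restrict E) {x | u < |f x|} ≤ min (ENNReal.ofReal t) (M u) := by
    intro u
    rw [Measure.restrict_apply (hsetmeas u)]
    exact le_min (le_trans (measure_mono inter_subset_right) hEt)
      (measure_mono inter_subset_left)
  -- Step A3: pointwise lower bound for inner integral in s
  have stepA3 : ∀ u : ℝ, min (ENNReal.ofReal t) (M u)
      ≤ ∫⁻ s in Ioc (0 : ℝ) t, D.indicator 1 (s, u) := by
    intro u
    have hind : ∀ s : ℝ, D.indicator (1 : ℝ × ℝ → ℝ≥0∞) (s, u)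
        = ({s' : ℝ | ENNReal.ofReal s' < M u}).indicator (1 : ℝ → ℝ≥0∞) s := by
      intro s
      by_cases h : ENNReal.ofReal s < M u <;>
        simp [Set.indicator_apply, hD, h]
    have hAmeas : MeasurableSet {s' : ℝ | ENNReal.ofReal s' < M u} :=
      measurableSet_lt ENNReal.measurable_ofReal measurable_const
    have heq : ∫⁻ s in Ioc (0 : ℝ) t, D.indicator 1 (s, u)
        = volume ({s' : ℝ | ENNReal.ofReal s' < M u} ∩ Ioc (0 : ℝ) t) := by
      simp_rw [hind]
      rw [lintegral_indicator_one hAmeas, Measure.restrict_apply hAmeas]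
    rw [heq]
    by_cases hMu : M u = ⊤
    · have hsub : Ioo (0 : ℝ) t ⊆ {s' : ℝ | ENNReal.ofReal s' < M u} ∩ Ioc (0 : ℝ) t := by
        intro s hs
        exact ⟨by simp [hMu], hs.1, hs.2.le⟩
      calc min (ENNReal.ofReal t) (M u) ≤ ENNReal.ofReal t := min_le_left _ _
        _ = volume (Ioo (0 : ℝ) t) := by rw [Real.volume_Ioo, sub_zero]
        _ ≤ _ := measure_mono hsub
    · set c : ℝ := min t (M u).toReal with hc
      have hsub : Ioo (0 : ℝ) c ⊆ {s' : ℝ | ENNReal.ofReal s' < M u} ∩ Ioc (0 : ℝ) t := by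
        intro s hs
        refine ⟨?_, hs.1, le_trans hs.2.le (min_le_left _ _)⟩
        have h1 : ENNReal.ofReal s < ENNReal.ofReal (M u).toReal :=
          (ENNReal.ofReal_lt_ofReal_iff_of_nonneg hs.1.le).mpr
            (lt_of_lt_of_le hs.2 (min_le_right _ _))
        rwa [ENNReal.ofReal_toReal hMu] at h1
      calc min (ENNReal.ofReal t) (M u)
          = ENNReal.ofReal c := by
            rw [hc, Monotone.map_min (fun _ _ h => ENNReal.ofReal_le_ofReal h),
              ENNReal.ofReal_toReal hMu]
        _ = volume (Ioo (0 : ℝ) c) := by rw [Real.volume_Ioo, sub_zero]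
        _ ≤ _ := measure_mono hsub
  -- Step A2: Tonelli swap
  have stepA2 : ∫⁻ u in Ioi (0 : ℝ), ∫⁻ s in Ioc (0 : ℝ) t, D.indicator 1 (s, u)
      = ∫⁻ s in Ioc (0 : ℝ) t, ∫⁻ u in Ioi (0 : ℝ), D.indicator 1 (s, u) := by
    exact lintegral_lintegral_swap
      (((measurable_one.indicator hDmeas).comp measurable_swap).aemeasurable)
  -- Step A1: bound inner integral in u by rearr
  have stepA1 : ∀ s ∈ Ioc (0 : ℝ) t,
      ∫⁻ u in Ioi (0 : ℝ), D.indicator 1 (s, u) ≤ rearr μ f s := by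
    intro s _
    have hAmeas : MeasurableSet {u : ℝ | ENNReal.ofReal s < M u} :=
      measurableSet_lt measurable_const hMmeas
    have hind : ∀ u : ℝ, D.indicator (1 : ℝ × ℝ → ℝ≥0∞) (s, u)
        = ({u' : ℝ | ENNReal.ofReal s < M u'}).indicator (1 : ℝ → ℝ≥0∞) u := by
      intro u
      by_cases h : ENNReal.ofReal s < M u <;> simp [Set.indicator_apply, hD, h]
    have heq : ∫⁻ u in Ioi (0 : ℝ), D.indicator 1 (s, u)
        = volume ({u' : ℝ | ENNReal.ofReal s < M u'} ∩ Ioi (0 : ℝ)) := by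
      simp_rw [hind]
      rw [lintegral_indicator_one hAmeas, Measure.restrict_apply hAmeas]
    rw [heq]
    rcases eq_or_ne (rearr μ f s) ⊤ with hres | hres
    · exact hres ▸ le_top
    have hsub : {u' : ℝ | ENNReal.ofReal s < M u'} ∩ Ioi (0 : ℝ)
        ⊆ Ioo (0 : ℝ) (rearr μ f s).toReal := by
      rintro u ⟨hu1, hu2⟩
      refine ⟨hu2, ?_⟩
      have hlt : ENNReal.ofReal u < rearr μ f s := by
        rw [lt_rearr_iff]
        rwa [hMeq u (le_of_lt hu2)]
      have := (ENNReal.toReal_lt_toReal ENNReal.ofReal_ne_top hres).mpr hlt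
      rwa [ENNReal.toReal_ofReal (le_of_lt hu2)] at this
    calc volume ({u' : ℝ | ENNReal.ofReal s < M u'} ∩ Ioi (0 : ℝ))
        ≤ volume (Ioo (0 : ℝ) (rearr μ f s).toReal) := measure_mono hsub
      _ ≤ ENNReal.ofReal ((rearr μ f s).toReal) := by
          rw [Real.volume_Ioo, sub_zero]
      _ ≤ rearr μ f s := ENNReal.ofReal_toReal_le
  -- Put everything together
  calc ∫⁻ x in E, ENNReal.ofReal |f x| ∂μ
      = ∫⁻ u in Ioi (0 : ℝ), (μ.restrict E) {x | u < |f x|} := step0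
    _ ≤ ∫⁻ u in Ioi (0 : ℝ), min (ENNReal.ofReal t) (M u) :=
        lintegral_mono step1
    _ ≤ ∫⁻ u in Ioi (0 : ℝ), ∫⁻ s in Ioc (0 : ℝ) t, D.indicator 1 (s, u) :=
        lintegral_mono stepA3
    _ = ∫⁻ s in Ioc (0 : ℝ) t, ∫⁻ u in Ioi (0 : ℝ), D.indicator 1 (s, u) := stepA2
    _ ≤ ∫⁻ s in Ioc (0 : ℝ) t, rearr μ f s :=
        setLIntegral_mono (Antitone.measurable (fun a b hab =>
          sInf_le_sInf fun v hv => le_trans hv (ENNReal.ofReal_le_ofReal hab))) stepA1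

end AuxLemmas

private lemma avg_bound {X : Type*} [MeasurableSpace X] [PseudoMetricSpace X]
    {μ : Measure X} {f : X → ℝ} {r : ℝ} {x : X}
    (hb0 : 0 < μ (closedBall x r)) (hbt : μ (closedBall x r) < ⊤)
    (hint : IntegrableOn f (closedBall x r) μ) :
    ENNReal.ofReal |avgOp μ r f x|
      ≤ (μ (closedBall x r))⁻¹ * ∫⁻ y in closedBall x r, ENNReal.ofReal |f y| ∂μ := by
  set B := closedBall x r
  have htR : (0 : ℝ) < (μ B).toReal := ENNReal.toReal_pos hb0.ne' hbt.ne
  have h1 : |avgOp μ r f x| ≤ (μ B).toReal⁻¹ * ∫ y in B, |f y| ∂μ := by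
    rw [avgOp, abs_mul, abs_of_nonneg (inv_nonneg.mpr ENNReal.toReal_nonneg)]
    refine mul_le_mul_of_nonneg_left ?_ (inv_nonneg.mpr ENNReal.toReal_nonneg)
    simpa [Real.norm_eq_abs] using
      norm_integral_le_integral_norm (μ := μ.restrict B) f
  have h2 : ∫ y in B, |f y| ∂μ = (∫⁻ y in B, ENNReal.ofReal |f y| ∂μ).toReal := by
    rw [integral_eq_lintegral_of_nonneg_ae (ae_of_all _ fun y => abs_nonneg (f y))
      (hint.1.norm.congr (ae_of_all _ fun y => Real.norm_eq_abs (f y)))]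
  have hfin : (∫⁻ y in B, ENNReal.ofReal |f y| ∂μ) ≠ ⊤ := by
    have := hint.2
    rw [hasFiniteIntegral_iff_norm] at this
    simpa [Real.norm_eq_abs] using this.ne
  calc ENNReal.ofReal |avgOp μ r f x|
      ≤ ENNReal.ofReal ((μ B).toReal⁻¹ * (∫⁻ y in B, ENNReal.ofReal |f y| ∂μ).toReal) := by
        apply ENNReal.ofReal_le_ofReal
        rw [← h2]; exact h1
    _ = (μ B)⁻¹ * ∫⁻ y in B, ENNReal.ofReal |f y| ∂μ := by
        rw [ENNReal.ofReal_mul (inv_nonneg.mpr ENNReal.toReal_nonneg),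
          ENNReal.ofReal_inv_of_pos htR, ENNReal.ofReal_toReal hbt.ne,
          ENNReal.ofReal_toReal hfin]


private lemma weak_cover {X : Type*} [MetricSpace X] [MeasurableSpace X] [BorelSpace X]
    {μ : Measure X} {r : ℝ} (hr : 0 < r)
    (hball : ∀ (x : X) (s : ℝ), 0 < s → 0 < μ (closedBall x s) ∧ μ (closedBall x s) < ⊤)
    {γ : ℝ} (hγ : ∀ x : X, μ (closedBall x (2 * r)) ≤ ENNReal.ofReal γ * μ (closedBall x r))
    {G : X → ℝ≥0∞} (hG : Measurable G) (hGfin : (∫⁻ x, G x ∂μ) ≠ ⊤)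
    {β : ℝ≥0∞} (hβ0 : β ≠ 0) (hβt : β ≠ ⊤) :
    μ {x | β < (μ (closedBall x r))⁻¹ * ∫⁻ y in closedBall x r, G y ∂μ}
      ≤ ENNReal.ofReal γ * β⁻¹ * ∫⁻ x, G x ∂μ := by
  set ν := μ.withDensity G with hν
  haveI : IsFiniteMeasure ν := isFiniteMeasure_withDensity hGfin
  set E' := {x | β < (μ (closedBall x r))⁻¹ * ∫⁻ y in closedBall x r, G y ∂μ} with hE'
  -- key pointwise consequence
  have hkey : ∀ x ∈ E', β * μ (closedBall x r) ≤ ν (closedBall x r) := by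
    intro x hx
    have hb := hball x r hr
    rw [hν, withDensity_apply _ measurableSet_closedBall]
    have h1 : β * μ (closedBall x r)
        ≤ ((μ (closedBall x r))⁻¹ * ∫⁻ y in closedBall x r, G y ∂μ) * μ (closedBall x r) :=
      mul_le_mul_left (le_of_lt hx) _
    rwa [mul_comm (μ (closedBall x r))⁻¹ _, mul_assoc,
      ENNReal.inv_mul_cancel hb.1.ne' hb.2.ne, mul_one] at h1
  -- Zorn's lemma: maximal disjoint subfamily
  set S := {P : Set X | P ⊆ E' ∧ P.PairwiseDisjoint (fun p => closedBall p r)} with hS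
  obtain ⟨P, hPmax⟩ := zorn_subset S (by
    intro c hc hchain
    refine ⟨⋃₀ c, ⟨sUnion_subset fun P hP => (hc hP).1, ?_⟩, fun s hs => subset_sUnion_of_mem hs⟩
    intro p hp q hq hpq
    obtain ⟨P1, hP1, hpP1⟩ := hp
    obtain ⟨P2, hP2, hqP2⟩ := hq
    rcases hchain.total hP1 hP2 with h | h
    · exact (hc hP2).2 (h hpP1) hqP2 hpq
    · exact (hc hP1).2 hpP1 (h hqP2) hpq)
  have hPsub : P ⊆ E' := hPmax.1.1
  have hPdisj : P.PairwiseDisjoint (fun p => closedBall p r) := hPmax.1.2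
  -- countability
  have hcnt : P.Countable := by
    have h1 : Pairwise (Function.onFun Disjoint fun p : P => closedBall (p : X) r) := by
      intro i j hij
      exact hPdisj i.2 j.2 (Subtype.coe_ne_coe.mpr hij)
    have h2 := MeasureTheory.Measure.countable_meas_pos_of_disjoint_iUnion (μ := ν)
      (As := fun p : P => closedBall (p : X) r)
      (fun p => measurableSet_closedBall) h1
    have h3 : {i : P | 0 < ν (closedBall (i : X) r)} = univ := by
      refine eq_univ_of_forall fun p => ?_
      have := hkey p (hPsub p.2)
      exact lt_of_lt_of_le (ENNReal.mul_pos hβ0 (hball (p : X) r hr).1.ne') this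
    rw [h3] at h2
    rw [← Set.countable_coe_iff]
    exact countable_univ_iff.mp h2
  -- covering
  have hcover : E' ⊆ ⋃ p ∈ P, closedBall p (2 * r) := by
    intro x hx
    have hmeet : ∃ p ∈ P, ¬Disjoint (closedBall x r) (closedBall p r) := by
      by_contra hcon
      push_neg at hcon
      by_cases hxP : x ∈ P
      · exact (Set.disjoint_left.mp (hcon x hxP) (mem_closedBall_self hr.le))
          (mem_closedBall_self hr.le)
      · have hmem : insert x P ∈ S :=
          ⟨insert_subset hx hPsub, hPdisj.insert fun p hp _ => hcon p hp⟩
        exact hxP (hPmax.2 hmem (subset_insert x P) (mem_insert x P))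
    obtain ⟨p, hp, hnd⟩ := hmeet
    obtain ⟨z, hz1, hz2⟩ := Set.not_disjoint_iff.mp hnd
    refine mem_biUnion hp (mem_closedBall.mpr ?_)
    calc dist x p ≤ dist x z + dist z p := dist_triangle x z p
      _ ≤ r + r := add_le_add (mem_closedBall'.mp hz1) (mem_closedBall.mp hz2)
      _ = 2 * r := by ring
  -- measure estimate
  calc μ E' ≤ μ (⋃ p ∈ P, closedBall p (2 * r)) := measure_mono hcover
    _ ≤ ∑' p : P, μ (closedBall (p : X) (2 * r)) := measure_biUnion_le μ hcnt _
    _ ≤ ∑' p : P, ENNReal.ofReal γ * β⁻¹ * ν (closedBall (p : X) r) := by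
        refine ENNReal.tsum_le_tsum fun p => ?_
        refine le_trans (hγ (p : X)) ?_
        rw [mul_assoc]
        refine mul_le_mul_right ?_ _
        have h1 := hkey p (hPsub p.2)
        calc μ (closedBall (p : X) r)
            = β⁻¹ * (β * μ (closedBall (p : X) r)) := by
              rw [← mul_assoc, ENNReal.inv_mul_cancel hβ0 hβt, one_mul]
          _ ≤ β⁻¹ * ν (closedBall (p : X) r) := mul_le_mul_right h1 _
    _ = ENNReal.ofReal γ * β⁻¹ * ∑' p : P, ν (closedBall (p : X) r) := by
        rw [ENNReal.tsum_mul_left]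
    _ ≤ ENNReal.ofReal γ * β⁻¹ * ∫⁻ x, G x ∂μ := by
        refine mul_le_mul_right ?_ _
        rw [← measure_biUnion hcnt hPdisj fun p _ => measurableSet_closedBall]
        calc ν (⋃ p ∈ P, closedBall p r) ≤ ν univ := measure_mono (subset_univ _)
          _ = ∫⁻ x, G x ∂μ := by rw [hν, withDensity_apply _ MeasurableSet.univ,
              setLIntegral_univ]


/-- If `X` is `s`-doubling and has the Vitali covering property for all
`s ≥ r`, there is `c ≥ 2` such that for every measurable `f` integrable on every set of
finite measure and every `t > 0`, `(A_r f)*(t) ≤ c f**(t)`. -/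
theorem statement_8 {X : Type*} [MetricSpace X] [MeasurableSpace X] [BorelSpace X]
    (μ : Measure X)
    (hball : ∀ (x : X) (s : ℝ), 0 < s → 0 < μ (closedBall x s) ∧ μ (closedBall x s) < ⊤)
    (r : ℝ) (hr : 0 < r)
    (hdbl : ∀ s : ℝ, r ≤ s → DoublingAt μ s)
    (hvitali : VitaliCoveringProperty X μ) :
    ∃ c : ℝ, 2 ≤ c ∧ ∀ f : X → ℝ, Measurable f →
      (∀ A : Set X, MeasurableSet A → μ A < ⊤ → IntegrableOn f A μ) →
      ∀ t : ℝ, 0 < t →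
        rearr μ (avgOp μ r f) t ≤ ENNReal.ofReal c * rearr2 μ f t := by
  
  obtain ⟨γ, hγ1, hγ⟩ := hdbl r le_rfl
  refine ⟨2 * γ + 1, by linarith, ?_⟩
  intro f hf hint t ht
  by_cases hT : rearr2 μ f t = ⊤
  · rw [hT, ENNReal.mul_top (ENNReal.ofReal_pos.mpr (by linarith)).ne']
    exact le_top
  set τ := ENNReal.ofReal t with hτ
  have hτ0 : τ ≠ 0 := (ENNReal.ofReal_pos.mpr ht).ne'
  have hτt : τ ≠ ⊤ := ENNReal.ofReal_ne_top
  set I := ∫⁻ s in Ioc (0 : ℝ) t, rearr μ f s with hIdef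
  have hr2I : rearr2 μ f t = τ⁻¹ * I := rfl
  have hIfin : I ≠ ⊤ := by
    intro h
    exact hT (by rw [hr2I, h, ENNReal.mul_top (ENNReal.inv_ne_zero.mpr hτt)])
  set α := rearr μ f t with hα
  have hατ : α * τ ≤ I := by
    have h1 : ∫⁻ _ in Ioc (0 : ℝ) t, α ∂volume = α * τ := by
      rw [setLIntegral_const, Real.volume_Ioc, sub_zero]
    rw [← h1]
    exact setLIntegral_mono (rearr_anti (μ := μ) (f := f)).measurable
      fun s hs => rearr_anti hs.2
  have hαfin : α ≠ ⊤ := by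
    intro h
    rw [h, ENNReal.top_mul hτ0] at hατ
    exact hIfin (top_le_iff.mp hατ)
  have hαle : α ≤ τ⁻¹ * I := by
    rw [← ENNReal.le_div_iff_mul_le (Or.inl hτ0) (Or.inl hτt)] at hατ
    rwa [ENNReal.div_eq_inv_mul] at hατ
  set E := {x : X | α < ENNReal.ofReal |f x|} with hEdef
  have hFmeas : Measurable fun x : X => ENNReal.ofReal |f x| := hf.abs.ennreal_ofReal
  have hEmeas : MeasurableSet E := measurableSet_lt measurable_const hFmeas
  have hEτ : μ E ≤ τ := rearr_mem t (lt_top_iff_ne_top.mpr hαfin)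
  set G : X → ℝ≥0∞ := E.indicator fun x => ENNReal.ofReal |f x| with hGdef
  have hGmeas : Measurable G := hFmeas.indicator hEmeas
  set J := ∫⁻ x, G x ∂μ with hJdef
  have hJE : J = ∫⁻ x in E, ENNReal.ofReal |f x| ∂μ :=
    lintegral_indicator hEmeas _
  have hJI : J ≤ I := by rw [hJE]; exact key_HL hf ht hEmeas hEτ
  have hJfin : J ≠ ⊤ := fun h => hIfin (top_le_iff.mp (h ▸ hJI))
  have hpoint : ∀ x, ENNReal.ofReal |avgOp μ r f x|
      ≤ (μ (closedBall x r))⁻¹ * (∫⁻ y in closedBall x r, G y ∂μ) + α := by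
    intro x
    obtain ⟨hb0, hbt⟩ := hball x r hr
    have h1 := avg_bound hb0 hbt (hint _ measurableSet_closedBall hbt)
    refine h1.trans ?_
    have hFle : ∀ y, ENNReal.ofReal |f y| ≤ G y + α := by
      intro y
      by_cases hy : y ∈ E
      · rw [hGdef, indicator_of_mem hy]; exact le_self_add
      · rw [hGdef, indicator_of_notMem hy, zero_add]
        exact not_lt.mp hy
    calc (μ (closedBall x r))⁻¹ * ∫⁻ y in closedBall x r, ENNReal.ofReal |f y| ∂μ
        ≤ (μ (closedBall x r))⁻¹
            * (∫⁻ y in closedBall x r, G y ∂μ + α * μ (closedBall x r)) := by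
          refine mul_le_mul_right ?_ _
          calc ∫⁻ y in closedBall x r, ENNReal.ofReal |f y| ∂μ
              ≤ ∫⁻ y in closedBall x r, (G y + α) ∂μ := lintegral_mono hFle
            _ = ∫⁻ y in closedBall x r, G y ∂μ + α * μ (closedBall x r) := by
                rw [lintegral_add_right _ measurable_const, setLIntegral_const]
      _ = (μ (closedBall x r))⁻¹ * ∫⁻ y in closedBall x r, G y ∂μ + α := by
          rw [mul_add, mul_comm α (μ (closedBall x r)), ← mul_assoc,
            ENNReal.inv_mul_cancel hb0.ne' hbt.ne, one_mul]
  by_cases hJ0 : J = 0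
  · have hzero : ∀ x, ENNReal.ofReal |avgOp μ r f x| ≤ α := by
      intro x
      have h1 := hpoint x
      have h2 : ∫⁻ y in closedBall x r, G y ∂μ = 0 :=
        le_antisymm (le_trans (setLIntegral_le_lintegral _ _) (le_of_eq hJ0)) zero_le
      rwa [h2, mul_zero, zero_add] at h1
    have hle : rearr μ (avgOp μ r f) t ≤ α := by
      apply sInf_le
      have hempty : {x | α < ENNReal.ofReal |avgOp μ r f x|} = (∅ : Set X) :=
        eq_empty_iff_forall_notMem.mpr fun x hx => absurd hx (not_lt.mpr (hzero x))
      show μ _ ≤ τ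
      rw [hempty, measure_empty]
      exact zero_le
    refine le_trans hle (le_trans hαle ?_)
    rw [← hr2I]
    exact le_mul_of_one_le_left zero_le (ENNReal.one_le_ofReal.mpr (by linarith))
  · set γ' := ENNReal.ofReal γ with hγ'
    have hγ'1 : 1 ≤ γ' := ENNReal.one_le_ofReal.mpr hγ1
    have hγ't : γ' ≠ ⊤ := ENNReal.ofReal_ne_top
    have hγ'0 : γ' ≠ 0 := fun h => (not_le.mpr zero_lt_one) (h ▸ hγ'1)
    set β := 2 * γ' * τ⁻¹ * J with hβ
    have hβ0 : β ≠ 0 :=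
      mul_ne_zero (mul_ne_zero (mul_ne_zero two_ne_zero hγ'0)
        (ENNReal.inv_ne_zero.mpr hτt)) hJ0
    have hβt : β ≠ ⊤ :=
      ENNReal.mul_ne_top (ENNReal.mul_ne_top (ENNReal.mul_ne_top ENNReal.ofNat_ne_top hγ't)
        (ENNReal.inv_ne_top.mpr hτ0)) hJfin
    have hweak := weak_cover hr hball hγ hGmeas (hJdef ▸ hJfin) hβ0 hβt
    have hγβJ : γ' * β⁻¹ * J ≤ τ := by
      have hrw : γ' * β⁻¹ * J = γ' * J / β := by
        rw [ENNReal.div_eq_inv_mul]; ring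
      rw [hrw, ENNReal.div_le_iff hβ0 hβt]
      have hτβ : τ * β = 2 * (γ' * J) := by
        have : τ * β = (τ * τ⁻¹) * (2 * (γ' * J)) := by rw [hβ]; ring
        rw [this, ENNReal.mul_inv_cancel hτ0 hτt, one_mul]
      rw [hτβ]
      exact le_mul_of_one_le_left zero_le one_le_two
    have hμE' : μ {x | β < (μ (closedBall x r))⁻¹ * ∫⁻ y in closedBall x r, G y ∂μ} ≤ τ :=
      hweak.trans hγβJ
    have hsub : {x | β + α < ENNReal.ofReal |avgOp μ r f x|}
        ⊆ {x | β < (μ (closedBall x r))⁻¹ * ∫⁻ y in closedBall x r, G y ∂μ} := by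
      intro x hx
      have h2 : β + α < ((μ (closedBall x r))⁻¹ * ∫⁻ y in closedBall x r, G y ∂μ) + α :=
        lt_of_lt_of_le hx (hpoint x)
      exact (ENNReal.add_lt_add_iff_right hαfin).mp h2
    have hfinal : rearr μ (avgOp μ r f) t ≤ β + α := by
      apply sInf_le
      show μ _ ≤ τ
      exact le_trans (measure_mono hsub) hμE'
    refine hfinal.trans ?_
    have hβle : β ≤ 2 * γ' * (τ⁻¹ * I) := by
      have : β = 2 * γ' * (τ⁻¹ * J) := by rw [hβ]; ring
      rw [this]
      exact mul_le_mul_right (mul_le_mul_right hJI _) _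
    calc β + α ≤ 2 * γ' * (τ⁻¹ * I) + 1 * (τ⁻¹ * I) :=
        add_le_add hβle (by rw [one_mul]; exact hαle)
      _ = (2 * γ' + 1) * (τ⁻¹ * I) := by rw [← add_mul]
      _ = ENNReal.ofReal (2 * γ + 1) * rearr2 μ f t := by
          rw [hr2I]
          congr 1
          rw [ENNReal.ofReal_add (by linarith) zero_le_one,
            ENNReal.ofReal_mul (by norm_num : (0:ℝ) ≤ 2), ENNReal.ofReal_one,
            ENNReal.ofReal_ofNat]
end
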